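/- arXiv:2105.04525 — 9 statements merged into one kernel-verified Lean document; each statement's English description precedes it below -/
import Mathlib

section
/- For every integer r ≥ 2 there exists an integer matrix A with exactly binom(r+2,2) − 2 rows such that A has rank r (over ℚ), A is 2-modular, every row of A is nonzero, and every two distinct rows of A are linearly independent over ℚ. -/
/-- A row of an integer matrix, viewed as a vector over `ℚ`. -/
def rowQ {m n : ℕ} (A : Matrix (Fin m) (Fin n) ℤ) (i : Fin m) : Fin n → ℚ :=
  fun j => (A i j : ℚ)

/-- An integer matrix of rank `r` is `2`-modular if every `r × r` submatrix has
determinant of absolute value at most `2`. -/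
def IsTwoModular {m n : ℕ} (A : Matrix (Fin m) (Fin n) ℤ) (r : ℕ) : Prop :=
  ∀ (f : Fin r → Fin m) (g : Fin r → Fin n), |(A.submatrix f g).det| ≤ 2

namespace TwoModAux

open Matrix Finset Function

variable {k k' : ℕ}

/-- indicator vector -/
def Ev (a : Fin k) : Fin k → ℚ := fun c => if c = a then 1 else 0

def indO : Option (Fin k) → Fin k → ℚ
  | none => fun _ => 0
  | some a => Ev a

/-- rows of a "network-type" matrix -/
def P0 (v : Fin k → ℚ) : Prop := ∃ a b, v = fun c => indO a c - indO b c

/-- special rows `e_z + e_b` -/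
def Qz (z : Fin k) (v : Fin k → ℚ) : Prop := ∃ b, b ≠ z ∧ v = fun c => Ev z c + Ev b c

lemma indO_mem (o : Option (Fin k)) (c : Fin k) : indO o c = 0 ∨ indO o c = 1 := by
  cases o with
  | none => exact Or.inl rfl
  | some a =>
    show (if c = a then (1:ℚ) else 0) = 0 ∨ (if c = a then (1:ℚ) else 0) = 1
    split_ifs <;> simp

lemma P0_abs_le {v : Fin k → ℚ} (h : P0 v) (c : Fin k) : |v c| ≤ 1 := by
  obtain ⟨a, b, rfl⟩ := h
  show |indO a c - indO b c| ≤ 1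
  rcases indO_mem a c with h1 | h1 <;> rcases indO_mem b c with h2 | h2 <;>
    rw [h1, h2] <;> norm_num

lemma exists_pull (g : Fin k' → Fin k) (hg : Injective g) (o : Option (Fin k)) :
    ∃ o', ∀ c, indO o' c = indO o (g c) := by
  cases o with
  | none => exact ⟨none, fun _ => rfl⟩
  | some a =>
    by_cases h : ∃ c, g c = a
    · obtain ⟨c0, hc0⟩ := h
      refine ⟨some c0, fun c => ?_⟩
      show (if c = c0 then (1:ℚ) else 0) = if g c = a then 1 else 0
      by_cases hc : c = c0
      · subst hc; rw [if_pos rfl, if_pos hc0]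
      · rw [if_neg hc, if_neg (fun hh => hc (hg (hh.trans hc0.symm)))]
    · refine ⟨none, fun c => ?_⟩
      show (0:ℚ) = if g c = a then 1 else 0
      rw [if_neg (fun hh => h ⟨c, hh⟩)]

lemma P0_comp {v : Fin k → ℚ} (h : P0 v) {g : Fin k' → Fin k} (hg : Injective g) :
    P0 (fun c => v (g c)) := by
  obtain ⟨a, b, rfl⟩ := h
  obtain ⟨a', ha⟩ := exists_pull g hg a
  obtain ⟨b', hb⟩ := exists_pull g hg b
  refine ⟨a', b', funext fun c => ?_⟩
  show indO a (g c) - indO b (g c) = indO a' c - indO b' c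
  rw [ha, hb]

lemma abs_det_le_card (M : Matrix (Fin (k+1)) (Fin (k+1)) ℚ) (i : Fin (k+1))
    (s : Finset (Fin (k+1)))
    (h0 : ∀ j ∉ s, M i j = 0) (h1 : ∀ j, |M i j| ≤ 1)
    (hm : ∀ j : Fin (k+1), |(M.submatrix i.succAbove j.succAbove).det| ≤ 1) :
    |M.det| ≤ (s.card : ℚ) := by
  rw [det_succ_row M i]
  have hz : ∀ j : Fin (k+1), j ∈ univ → j ∉ s →
      ((-1:ℚ)^((i : ℕ)+(j : ℕ)) * M i j * (M.submatrix i.succAbove j.succAbove).det) = 0 := by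
    intro j _ hj; rw [h0 j hj, mul_zero, zero_mul]
  rw [← Finset.sum_subset (subset_univ s) hz]
  refine (Finset.abs_sum_le_sum_abs _ _).trans ?_
  have hb : ∀ j ∈ s,
      |(-1:ℚ)^((i : ℕ)+(j : ℕ)) * M i j * (M.submatrix i.succAbove j.succAbove).det| ≤ 1 := by
    intro j _
    rw [abs_mul, abs_mul, abs_pow, abs_neg, abs_one, one_pow, one_mul]
    exact mul_le_one₀ (h1 j) (abs_nonneg _) (hm j)
  calc ∑ j ∈ s, |(-1:ℚ)^((i : ℕ)+(j : ℕ)) * M i j * (M.submatrix i.succAbove j.succAbove).det|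
      ≤ ∑ _j ∈ s, (1:ℚ) := Finset.sum_le_sum hb
    _ = (s.card : ℚ) := by simp

lemma lemA : ∀ {k} (M : Matrix (Fin k) (Fin k) ℚ), (∀ i, P0 (M i)) → |M.det| ≤ 1 := by
  intro k
  induction k with
  | zero => intro M _; rw [det_fin_zero]; norm_num
  | succ k ih =>
    intro M hP
    by_cases hrows : ∀ i, ∃ a b : Fin (k+1), a ≠ b ∧ M i = fun c => Ev a c - Ev b c
    · have hv : M *ᵥ (fun _ => (1:ℚ)) = 0 := by
        funext i
        obtain ⟨a, b, hab, hi⟩ := hrows i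
        show ∑ j, M i j * 1 = 0
        simp only [hi, mul_one]
        rw [Finset.sum_sub_distrib]
        simp [Ev]
      have hdet : M.det = 0 := by
        refine Matrix.exists_mulVec_eq_zero_iff.mp ⟨fun _ => 1, ?_, hv⟩
        intro h
        exact one_ne_zero (congrFun h 0)
      rw [hdet]; norm_num
    · push_neg at hrows
      obtain ⟨i, hi⟩ := hrows
      obtain ⟨ao, bo, hrow⟩ := hP i
      have key : (M i = fun _ => (0:ℚ)) ∨
          (∃ c0 ε, (ε = (1:ℚ) ∨ ε = -1) ∧ M i = fun c => ε * Ev c0 c) := by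
        cases ao with
        | none =>
          cases bo with
          | none =>
            left; rw [hrow]; funext c
            show (0:ℚ) - 0 = 0
            ring
          | some b =>
            right
            refine ⟨b, -1, Or.inr rfl, ?_⟩
            rw [hrow]; funext c
            show (0:ℚ) - Ev b c = -1 * Ev b c
            ring
        | some a =>
          cases bo with
          | none =>
            right
            refine ⟨a, 1, Or.inl rfl, ?_⟩
            rw [hrow]; funext c
            show Ev a c - 0 = 1 * Ev a c
            ring
          | some b =>
            by_cases hab : a = b
            · left; subst hab; rw [hrow]; funext c
              show Ev a c - Ev a c = 0
              ring
            · exact absurd hrow (hi a b hab)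
      rcases key with h0 | ⟨c0, ε, hε, hrow'⟩
      · have : M.det = 0 := det_eq_zero_of_row_eq_zero (A := M) i (fun j => by rw [h0])
        rw [this]; norm_num
      · have habs : |M.det| ≤ (({c0} : Finset (Fin (k+1))).card : ℚ) := by
          refine abs_det_le_card M i {c0} ?_ ?_ ?_
          · intro j hj
            rw [hrow']
            show ε * Ev c0 j = 0
            rw [Ev, if_neg (by simpa using hj), mul_zero]
          · intro j
            rw [hrow']
            show |ε * Ev c0 j| ≤ 1
            rw [abs_mul]
            rcases hε with rfl | rfl <;>
              · rcases indO_mem (some c0) j with h | h <;>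
                  · rw [show Ev c0 j = indO (some c0) j from rfl, h] <;> norm_num
          · intro j
            refine ih _ (fun a => ?_)
            exact P0_comp (hP (i.succAbove a)) (Fin.succAbove_right_injective)
        simpa using habs


lemma Qz_abs_le {z : Fin k} {v : Fin k → ℚ} (h : Qz z v) (c : Fin k) : |v c| ≤ 1 := by
  obtain ⟨b, hbz, rfl⟩ := h
  show |Ev z c + Ev b c| ≤ 1
  by_cases hc : c = z
  · subst hc
    rw [show Ev c c = 1 from if_pos rfl, show Ev b c = 0 from if_neg (fun h => hbz h.symm)]
    norm_num
  · rw [show Ev z c = 0 from if_neg hc]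
    rcases indO_mem (some b) c with h | h <;> rw [show Ev b c = indO (some b) c from rfl, h] <;>
      norm_num

lemma lemB_aux (N : ℕ) : ∀ {k} (M : Matrix (Fin k) (Fin k) ℚ) (z : Fin k) (t : Finset (Fin k)),
    t.card ≤ N → (∀ i ∉ t, P0 (M i)) → (∀ i, P0 (M i) ∨ Qz z (M i)) → |M.det| ≤ 2 := by
  induction N with
  | zero =>
    intro k M z t ht hP _
    have ht0 : t = ∅ := Finset.card_eq_zero.mp (Nat.le_zero.mp ht)
    subst ht0
    exact (lemA M (fun i => hP i (Finset.notMem_empty i))).trans (by norm_num)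
  | succ N ih =>
    intro k M z t ht hP hall
    by_cases hone : ∀ i ∈ t, P0 (M i)
    · have hPall : ∀ i, P0 (M i) := fun i => if h : i ∈ t then hone i h else hP i h
      exact (lemA M hPall).trans (by norm_num)
    · push_neg at hone
      obtain ⟨i1, hi1t, hi1⟩ := hone
      have hq1 : Qz z (M i1) := (hall i1).resolve_left hi1
      by_cases htwo : ∀ i ∈ t.erase i1, P0 (M i)
      · -- exactly one special row; expand along it
        have hrowP : ∀ i, i ≠ i1 → P0 (M i) := by
          intro i hi
          by_cases h : i ∈ t
          · exact htwo i (Finset.mem_erase.mpr ⟨hi, h⟩)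
          · exact hP i h
        obtain ⟨b, hbz, hrow⟩ := hq1
        have hk : ∃ k', k = k' + 1 := ⟨k - 1, by have := z.isLt; omega⟩
        obtain ⟨k', rfl⟩ := hk
        have habs : |M.det| ≤ ((({z, b} : Finset (Fin (k'+1))).card : ℚ)) := by
          refine abs_det_le_card M i1 {z, b} ?_ ?_ ?_
          · intro j hj
            simp only [Finset.mem_insert, Finset.mem_singleton, not_or] at hj
            rw [hrow]
            show Ev z j + Ev b j = 0
            rw [Ev, Ev, if_neg hj.1, if_neg hj.2, add_zero]
          · intro j
            rw [hrow]
            exact Qz_abs_le ⟨b, hbz, rfl⟩ j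
          · intro j
            refine lemA _ (fun a => ?_)
            exact P0_comp (hrowP (i1.succAbove a) (Fin.succAbove_ne i1 a))
              (Fin.succAbove_right_injective)
        rw [Finset.card_pair (fun h => hbz h.symm)] at habs
        exact_mod_cast habs
      · push_neg at htwo
        obtain ⟨i2, hi2e, hi2⟩ := htwo
        have hq2 : Qz z (M i2) := (hall i2).resolve_left hi2
        have hne : i2 ≠ i1 := (Finset.mem_erase.mp hi2e).1
        have hi2t : i2 ∈ t := (Finset.mem_erase.mp hi2e).2
        obtain ⟨b1, hb1z, hrow1⟩ := hq1
        obtain ⟨b2, hb2z, hrow2⟩ := hq2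
        by_cases hbb : b1 = b2
        · subst hbb
          have : M.det = 0 := det_zero_of_row_eq hne (hrow2.trans hrow1.symm)
          rw [this]; norm_num
        · set M' := M.updateRow i2 (M i2 + (-1:ℚ) • M i1) with hM'
          have hdet : M'.det = M.det := det_updateRow_add_smul_self M hne (-1)
          have hP2 : P0 (M' i2) := by
            refine ⟨some b2, some b1, ?_⟩
            have h2 : M' i2 = M i2 + (-1:ℚ) • M i1 := Matrix.updateRow_self
            rw [h2, hrow1, hrow2]
            funext c
            show (Ev z c + Ev b2 c) + (-1:ℚ) * (Ev z c + Ev b1 c) = indO (some b2) c - indO (some b1) c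
            show (Ev z c + Ev b2 c) + (-1:ℚ) * (Ev z c + Ev b1 c) = Ev b2 c - Ev b1 c
            ring
          have hupd : ∀ i, i ≠ i2 → M' i = M i := fun i hi => Matrix.updateRow_ne hi
          refine hdet ▸ ih M' z (t.erase i2) ?_ ?_ ?_
          · have := Finset.card_erase_of_mem hi2t
            omega
          · intro i hi
            by_cases h : i = i2
            · subst h; exact hP2
            · rw [hupd i h]
              refine hP i (fun hit => hi (Finset.mem_erase.mpr ⟨h, hit⟩))
          · intro i
            by_cases h : i = i2
            · subst h; exact Or.inl hP2
            · rw [hupd i h]; exact hall i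

lemma lemB {k} (M : Matrix (Fin k) (Fin k) ℚ) (z : Fin k)
    (hall : ∀ i, P0 (M i) ∨ Qz z (M i)) : |M.det| ≤ 2 :=
  lemB_aux (Finset.univ.card) M z Finset.univ le_rfl
    (fun i hi => absurd (Finset.mem_univ i) hi) hall


/-! ### The concrete construction -/

def Idx (r : ℕ) : Type := Fin r ⊕ ((Σ i : Fin r, Fin i.val) ⊕ Fin (r - 1))

instance (r : ℕ) : Fintype (Idx r) := by unfold Idx; infer_instance

variable {r : ℕ}

def dl (p : Σ i : Fin r, Fin i.val) : Fin r := ⟨p.2.val, lt_trans p.2.isLt p.1.isLt⟩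

def tb (l : Fin (r - 1)) : Fin r := ⟨l.val + 1, by have := l.isLt; omega⟩

def tz (l : Fin (r - 1)) : Fin r := ⟨0, by have := l.isLt; omega⟩

def Brow : Idx r → Fin r → ℤ
  | Sum.inl i => fun c => if c = i then 1 else 0
  | Sum.inr (Sum.inl p) => fun c => (if c = dl p then 1 else 0) - (if c = p.1 then 1 else 0)
  | Sum.inr (Sum.inr l) => fun c => (if c = tz l then 1 else 0) + (if c = tb l then 1 else 0)

def vQ (x : Idx r) : Fin r → ℚ := fun c => ((Brow x c : ℤ) : ℚ)

lemma vQ_inl (i : Fin r) : vQ (Sum.inl i) = Ev i := by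
  funext c
  show ((if c = i then (1:ℤ) else 0 : ℤ) : ℚ) = Ev i c
  rw [Ev, apply_ite (fun (z : ℤ) => (z : ℚ))]
  norm_num

lemma vQ_d (p : Σ i : Fin r, Fin i.val) :
    vQ (Sum.inr (Sum.inl p)) = fun c => Ev (dl p) c - Ev p.1 c := by
  funext c
  show (((if c = dl p then (1:ℤ) else 0) - (if c = p.1 then 1 else 0) : ℤ) : ℚ) = _
  rw [Ev, Ev]
  push_cast [apply_ite (fun (z : ℤ) => (z : ℚ))]
  norm_num

lemma vQ_t (l : Fin (r - 1)) :
    vQ (Sum.inr (Sum.inr l)) = fun c => Ev (tz l) c + Ev (tb l) c := by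
  funext c
  show (((if c = tz l then (1:ℤ) else 0) + (if c = tb l then 1 else 0) : ℤ) : ℚ) = _
  rw [Ev, Ev]
  push_cast [apply_ite (fun (z : ℤ) => (z : ℚ))]
  norm_num

lemma sum_Ev (a : Fin r) : ∑ c, Ev a c = 1 := by simp [Ev]

/-! ### Descriptors -/

def D1 (v : Fin r → ℚ) : Prop := ∃ a : Fin r, v = Ev a

def D2 (v : Fin r → ℚ) : Prop :=
  ∃ a b : Fin r, a.val < b.val ∧ v = fun c => Ev a c - Ev b c

def D3 (z : Fin r) (v : Fin r → ℚ) : Prop :=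
  ∃ b : Fin r, 0 < b.val ∧ v = fun c => Ev z c + Ev b c

lemma Ev_apply_self (a : Fin r) : Ev a a = 1 := if_pos rfl

lemma Ev_apply_ne {a c : Fin r} (h : c ≠ a) : Ev a c = 0 := if_neg h

section Desc

variable {z : Fin r} (hz : z.val = 0) {v : Fin r → ℚ}
include hz

lemma desc_exists_one (h : D1 v ∨ D2 v ∨ D3 z v) : ∃ p, v p = 1 := by
  rcases h with ⟨a, rfl⟩ | ⟨a, b, hab, rfl⟩ | ⟨b, hb, rfl⟩
  · exact ⟨a, Ev_apply_self a⟩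
  · refine ⟨a, ?_⟩
    show Ev a a - Ev b a = 1
    rw [Ev_apply_self, Ev_apply_ne (fun h => by rw [h] at hab; omega)]
    ring
  · refine ⟨b, ?_⟩
    show Ev z b + Ev b b = 1
    rw [Ev_apply_self, Ev_apply_ne (fun h => by rw [h, hz] at hb; omega)]
    ring

lemma desc_entries (h : D1 v ∨ D2 v ∨ D3 z v) (c : Fin r) :
    v c = -1 ∨ v c = 0 ∨ v c = 1 := by
  rcases h with ⟨a, rfl⟩ | ⟨a, b, hab, rfl⟩ | ⟨b, hb, rfl⟩
  · show Ev a c = -1 ∨ Ev a c = 0 ∨ Ev a c = 1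
    unfold Ev
    split_ifs <;> norm_num
  · show Ev a c - Ev b c = -1 ∨ Ev a c - Ev b c = 0 ∨ Ev a c - Ev b c = 1
    unfold Ev
    split_ifs <;> norm_num
  · have hbne : b ≠ z := fun h => by rw [h, hz] at hb; omega
    show Ev z c + Ev b c = -1 ∨ Ev z c + Ev b c = 0 ∨ Ev z c + Ev b c = 1
    by_cases h1 : c = z
    · subst h1
      rw [Ev_apply_self, Ev_apply_ne (fun h => hbne h.symm)]
      norm_num
    · rw [Ev_apply_ne h1]
      unfold Ev
      split_ifs <;> norm_num

omit hz in
lemma desc_sum (h : D1 v ∨ D2 v ∨ D3 z v) :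
    (D1 v ∧ ∑ c, v c = 1) ∨ (D2 v ∧ ∑ c, v c = 0) ∨ (D3 z v ∧ ∑ c, v c = 2) := by
  rcases h with h | h | h
  · left
    obtain ⟨a, rfl⟩ := h
    exact ⟨⟨a, rfl⟩, sum_Ev a⟩
  · right; left
    obtain ⟨a, b, hab, rfl⟩ := h
    refine ⟨⟨a, b, hab, rfl⟩, ?_⟩
    rw [Finset.sum_sub_distrib, sum_Ev, sum_Ev]
    ring
  · right; right
    obtain ⟨b, hb, rfl⟩ := h
    refine ⟨⟨b, hb, rfl⟩, ?_⟩
    rw [Finset.sum_add_distrib, sum_Ev, sum_Ev]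
    norm_num

lemma desc_ne_zero (h : D1 v ∨ D2 v ∨ D3 z v) : v ≠ 0 := by
  obtain ⟨p, hp⟩ := desc_exists_one hz h
  intro h0
  rw [h0] at hp
  rw [Pi.zero_apply] at hp
  norm_num at hp

lemma pair_indep {w : Fin r → ℚ} (hv : D1 v ∨ D2 v ∨ D3 z v) (hw : D1 w ∨ D2 w ∨ D3 z w)
    (hvw : v ≠ w) : LinearIndependent ℚ ![v, w] := by
  rw [LinearIndependent.pair_iff' (desc_ne_zero hz hv)]
  intro a ha
  have hac : ∀ c, a * v c = w c := by
    intro c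
    have := congrFun ha c
    simpa using this
  obtain ⟨p, hp⟩ := desc_exists_one hz hv
  have hap : a = w p := by
    have := hac p
    rwa [hp, mul_one] at this
  rcases desc_entries hz hw p with h | h | h
  · -- a = -1 : w = -v
    rw [h] at hap
    subst hap
    have hneg : ∀ c, w c = -(v c) := fun c => by rw [← hac c]; ring
    have hsum : ∑ c, w c = -∑ c, v c := by
      rw [← Finset.sum_neg_distrib]
      exact Finset.sum_congr rfl fun c _ => hneg c
    rcases desc_sum hv with ⟨_, hsv⟩ | ⟨hdv, hsv⟩ | ⟨_, hsv⟩ <;>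
      rcases desc_sum hw with ⟨_, hsw⟩ | ⟨hdw, hsw⟩ | ⟨_, hsw⟩ <;>
        rw [hsv, hsw] at hsum <;> try norm_num at hsum
    -- remaining: both D2
    obtain ⟨a1, b1, h1, rfl⟩ := hdv
    obtain ⟨a2, b2, h2, rfl⟩ := hdw
    have hb1 : a1 ≠ b1 := fun h => by rw [h] at h1; omega
    have e1 : Ev a2 a1 - Ev b2 a1 = -1 := by
      have := hneg a1
      rw [show (fun c => Ev a1 c - Ev b1 c) a1 = Ev a1 a1 - Ev b1 a1 from rfl] at this
      rw [Ev_apply_self, Ev_apply_ne hb1] at this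
      rw [show (fun c => Ev a2 c - Ev b2 c) a1 = Ev a2 a1 - Ev b2 a1 from rfl] at this
      rw [this]; ring
    have e2 : Ev a2 b1 - Ev b2 b1 = 1 := by
      have := hneg b1
      rw [show (fun c => Ev a1 c - Ev b1 c) b1 = Ev a1 b1 - Ev b1 b1 from rfl] at this
      rw [Ev_apply_self, Ev_apply_ne (fun h => hb1 h.symm)] at this
      rw [show (fun c => Ev a2 c - Ev b2 c) b1 = Ev a2 b1 - Ev b2 b1 from rfl] at this
      rw [this]; ring
    have hb2a1 : a1 = b2 := by
      unfold Ev at e1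
      split_ifs at e1 <;> first | assumption | norm_num at e1
    have ha2b1 : b1 = a2 := by
      unfold Ev at e2
      split_ifs at e2 <;> first | assumption | norm_num at e2
    rw [← hb2a1, ← ha2b1] at h2
    omega
  · -- a = 0 : w = 0, contradiction
    rw [h] at hap
    subst hap
    obtain ⟨q, hq⟩ := desc_exists_one hz hw
    have := hac q
    rw [hq, zero_mul] at this
    exact one_ne_zero this.symm
  · -- a = 1 : w = v, contradiction
    rw [h] at hap
    subst hap
    exact hvw (funext fun c => by rw [← hac c, one_mul])

end Desc


lemma sum_vQ_inl (i : Fin r) : ∑ c, vQ (Sum.inl i) c = 1 := by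
  simp only [vQ_inl]; exact sum_Ev i

lemma sum_vQ_d (p : Σ i : Fin r, Fin i.val) : ∑ c, vQ (Sum.inr (Sum.inl p)) c = 0 := by
  simp only [vQ_d]
  rw [Finset.sum_sub_distrib, sum_Ev, sum_Ev]
  ring

lemma sum_vQ_t (l : Fin (r - 1)) : ∑ c, vQ (Sum.inr (Sum.inr l)) c = 2 := by
  simp only [vQ_t]
  rw [Finset.sum_add_distrib, sum_Ev, sum_Ev]
  norm_num

lemma dl_ne_fst (p : Σ i : Fin r, Fin i.val) : dl p ≠ p.1 := by
  intro h
  have := congrArg Fin.val h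
  have h2 := p.2.isLt
  simp only [dl] at this
  omega

lemma tb_ne_tz (l l' : Fin (r - 1)) : tb l ≠ tz l' := by
  intro h
  have := congrArg Fin.val h
  simp [tb, tz] at this

lemma vQ_inj : Function.Injective (vQ (r := r)) := by
  intro x y h
  have hsum : ∑ c, vQ x c = ∑ c, vQ y c := by rw [h]
  rcases x with i | p | l <;> rcases y with i' | p' | l'
  · -- inl / inl
    have h1 := congrFun h i
    simp only [vQ_inl] at h1
    rw [Ev_apply_self] at h1
    unfold Ev at h1
    split_ifs at h1 with hii
    · rw [hii]
    · norm_num at h1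
  · rw [sum_vQ_inl, sum_vQ_d] at hsum; norm_num at hsum
  · rw [sum_vQ_inl, sum_vQ_t] at hsum; norm_num at hsum
  · rw [sum_vQ_d, sum_vQ_inl] at hsum; norm_num at hsum
  · -- d / d
    obtain ⟨i, l⟩ := p
    obtain ⟨i', l'⟩ := p'
    have e1 := congrFun h (dl ⟨i, l⟩)
    have e2 := congrFun h ((⟨i, l⟩ : Σ i : Fin r, Fin i.val).1)
    simp only [vQ_d] at e1 e2
    rw [Ev_apply_self, Ev_apply_ne (dl_ne_fst ⟨i, l⟩)] at e1
    rw [Ev_apply_self, Ev_apply_ne (fun hh => dl_ne_fst (⟨i, l⟩ : Σ i : Fin r, Fin i.val) hh.symm)] at e2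
    have hii : (⟨i, l⟩ : Σ i : Fin r, Fin i.val).1 = (⟨i', l'⟩ : Σ i : Fin r, Fin i.val).1 := by
      unfold Ev at e2
      split_ifs at e2 <;> first | assumption | norm_num at e2
    have hdd : dl (⟨i, l⟩ : Σ i : Fin r, Fin i.val) = dl ⟨i', l'⟩ := by
      unfold Ev at e1
      split_ifs at e1 <;> first | assumption | norm_num at e1
    have hii' : i = i' := hii
    subst hii'
    have hvv : (dl (⟨i, l⟩ : Σ i : Fin r, Fin i.val)).val = (dl (⟨i, l'⟩ : Σ i : Fin r, Fin i.val)).val := congrArg Fin.val hdd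
    have hll : l = l' := Fin.ext hvv
    subst hll
    rfl
  · rw [sum_vQ_d, sum_vQ_t] at hsum; norm_num at hsum
  · rw [sum_vQ_t, sum_vQ_inl] at hsum; norm_num at hsum
  · rw [sum_vQ_t, sum_vQ_d] at hsum; norm_num at hsum
  · -- t / t
    have e1 := congrFun h (tb l)
    simp only [vQ_t] at e1
    rw [Ev_apply_self, Ev_apply_ne (tb_ne_tz l l), Ev_apply_ne (tb_ne_tz l l')] at e1
    unfold Ev at e1
    split_ifs at e1 with htt
    · have : l = l' := by
        have := congrArg Fin.val htt
        simp only [tb] at this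
        exact Fin.ext (by omega)
      rw [this]
    · norm_num at e1

lemma hdesc (hr : 2 ≤ r) (x : Idx r) :
    D1 (vQ x) ∨ D2 (vQ x) ∨ D3 (⟨0, by omega⟩ : Fin r) (vQ x) := by
  rcases x with i | p | l
  · exact Or.inl ⟨i, vQ_inl i⟩
  · refine Or.inr (Or.inl ⟨dl p, p.1, p.2.isLt, vQ_d p⟩)
  · refine Or.inr (Or.inr ⟨tb l, by simp [tb], ?_⟩)
    rw [vQ_t]
    have : tz l = (⟨0, by omega⟩ : Fin r) := Fin.ext rfl
    rw [this]


lemma desc_to_PQ {z : Fin r} {v : Fin r → ℚ} (hz : z.val = 0)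
    (h : D1 v ∨ D2 v ∨ D3 z v) (gE : Equiv.Perm (Fin r)) :
    P0 (fun c => v (gE c)) ∨ Qz (gE.symm z) (fun c => v (gE c)) := by
  have hEv : ∀ (a : Fin r) (c : Fin r), Ev a (gE c) = Ev (gE.symm a) c := by
    intro a c
    unfold Ev
    exact if_congr (Equiv.apply_eq_iff_eq_symm_apply gE) rfl rfl
  rcases h with ⟨a, rfl⟩ | ⟨a, b, hab, rfl⟩ | ⟨b, hb, rfl⟩
  · left
    refine ⟨some (gE.symm a), none, funext fun c => ?_⟩
    show Ev a (gE c) = Ev (gE.symm a) c - 0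
    rw [hEv]; ring
  · left
    refine ⟨some (gE.symm a), some (gE.symm b), funext fun c => ?_⟩
    show Ev a (gE c) - Ev b (gE c) = Ev (gE.symm a) c - Ev (gE.symm b) c
    rw [hEv, hEv]
  · right
    refine ⟨gE.symm b, ?_, funext fun c => ?_⟩
    · intro hh
      have hbz : b = z := gE.symm.injective hh
      have := congrArg Fin.val hbz
      omega
    · show Ev z (gE c) + Ev b (gE c) = Ev (gE.symm z) c + Ev (gE.symm b) c
      rw [hEv, hEv]

end TwoModAux

open Matrix in
/-- For every `r ≥ 2` there is a rank-`r` `2`-modular integer matrix with exactly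
`(r+2 choose 2) - 2` rows, all nonzero and pairwise non-parallel. -/
theorem statement1 (r : ℕ) (hr : 2 ≤ r) :
    ∃ (n : ℕ) (A : Matrix (Fin (Nat.choose (r + 2) 2 - 2)) (Fin n) ℤ),
      (A.map ((↑) : ℤ → ℚ)).rank = r ∧
      IsTwoModular A r ∧
      (∀ i, rowQ A i ≠ 0) ∧
      (∀ i i', i ≠ i' → LinearIndependent ℚ ![rowQ A i, rowQ A i']) := by
  classical
  have hcard : Fintype.card (TwoModAux.Idx r) = Nat.choose (r + 2) 2 - 2 := by
    have h1 : Fintype.card (TwoModAux.Idx r) = r + ((∑ i : Fin r, i.val) + (r - 1)) := by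
      simp [TwoModAux.Idx]
    have h2 : ∑ i : Fin r, i.val = r.choose 2 := by
      rw [Fin.sum_univ_eq_sum_range (fun i => i) r, Finset.sum_range_id, Nat.choose_two_right]
    have h3 : (r + 2).choose 2 = (r + 1) + (r + r.choose 2) := by
      have ha : (r + 2).choose 2 = (r+1).choose 1 + (r+1).choose 2 := Nat.choose_succ_succ (r+1) 1
      have hb : (r + 1).choose 2 = r.choose 1 + r.choose 2 := Nat.choose_succ_succ r 1
      rw [ha, hb, Nat.choose_one_right, Nat.choose_one_right]
    rw [h1, h2, h3]
    generalize r.choose 2 = q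
    omega
  let e : TwoModAux.Idx r ≃ Fin (Nat.choose (r + 2) 2 - 2) := Fintype.equivFinOfCardEq hcard
  let z0 : Fin r := ⟨0, by omega⟩
  have hz0 : z0.val = 0 := rfl
  refine ⟨r, Matrix.of (fun i j => TwoModAux.Brow (e.symm i) j), ?_, ?_, ?_, ?_⟩
  · -- rank
    set M := (Matrix.of (fun i j => TwoModAux.Brow (e.symm i) j)).map ((↑) : ℤ → ℚ) with hM
    have hinj : Function.Injective M.mulVecLin := by
      intro x y hxy
      have hxy' : M *ᵥ x = M *ᵥ y := hxy
      have hMv : ∀ (v : Fin r → ℚ) (j : Fin r), (M *ᵥ v) (e (Sum.inl j)) = v j := by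
        intro v j
        show ∑ c, M (e (Sum.inl j)) c * v c = v j
        have hrow : ∀ c, M (e (Sum.inl j)) c = TwoModAux.Ev j c := by
          intro c
          show ((TwoModAux.Brow (e.symm (e (Sum.inl j))) c : ℤ) : ℚ) = _
          rw [show e.symm (e (Sum.inl j)) = Sum.inl j from e.symm_apply_apply _]
          exact congrFun (TwoModAux.vQ_inl j) c
        rw [Finset.sum_congr rfl (fun c _ => by rw [hrow c])]
        unfold TwoModAux.Ev
        simp
      funext j
      have := congrFun hxy' (e (Sum.inl j))
      rwa [hMv x j, hMv y j] at this
    show M.rank = r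
    unfold Matrix.rank
    rw [LinearMap.finrank_range_of_inj hinj, Module.finrank_fintype_fun_eq_card,
      Fintype.card_fin]
  · -- 2-modularity
    intro f g
    set X := (Matrix.of (fun i j => TwoModAux.Brow (e.symm i) j)).submatrix f g with hX
    by_cases hg : Function.Injective g
    · have hbij : Function.Bijective g := (Finite.injective_iff_bijective).mp hg
      set gE : Equiv.Perm (Fin r) := Equiv.ofBijective g hbij with hgE
      set N : Matrix (Fin r) (Fin r) ℚ :=
        Matrix.of (fun j c => TwoModAux.vQ (e.symm (f j)) (g c)) with hN
      have hrows : ∀ j, TwoModAux.P0 (N j) ∨ TwoModAux.Qz (gE.symm z0) (N j) := by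
        intro j
        exact TwoModAux.desc_to_PQ hz0 (TwoModAux.hdesc hr (e.symm (f j))) gE
      have h2 := TwoModAux.lemB N (gE.symm z0) hrows
      have hdet : ((X.det : ℤ) : ℚ) = N.det := by
        have := RingHom.map_det (Int.castRingHom ℚ) X
        rw [show ((X.det : ℤ) : ℚ) = (Int.castRingHom ℚ) X.det from rfl, this]
        rfl
      have : |((X.det : ℤ) : ℚ)| ≤ 2 := by rw [hdet]; exact h2
      exact_mod_cast this
    · rw [Function.not_injective_iff] at hg
      obtain ⟨c1, c2, hcc, hne⟩ := hg
      have : X.det = 0 :=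
        Matrix.det_zero_of_column_eq hne (fun k => by
          show TwoModAux.Brow (e.symm (f k)) (g c1) = TwoModAux.Brow (e.symm (f k)) (g c2)
          rw [hcc])
      rw [this]
      norm_num
  · -- rows nonzero
    intro i
    exact TwoModAux.desc_ne_zero hz0 (TwoModAux.hdesc hr (e.symm i))
  · -- pairwise independent
    intro i i' hne
    refine TwoModAux.pair_indep hz0 (TwoModAux.hdesc hr (e.symm i))
      (TwoModAux.hdesc hr (e.symm i')) ?_
    intro hh
    exact hne (e.symm.injective (TwoModAux.vQ_inj hh))
end

section
/- For each integer r ≥ 2, every r × r submatrix of the matrix A_r has determinant of absolute value at most 2 (i.e., A_r is 2-modular). -/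
/-- Index set for the columns of `D_r`: pairs `(i, j)` of rows with `i < j`.
There are `r.choose 2` such pairs. -/
abbrev PairIdx (r : ℕ) := {p : Fin r × Fin r // p.1 < p.2}

/-- The matrix `A_r = [I_r | D_r | B_r]`, where the columns of `D_r` are the vectors
`e_i - e_j` for `i < j`, and the `j`-th column of `B_r` is `e_1 + e_{j+1}`. -/
def Amat (r : ℕ) : Matrix (Fin r) (Fin r ⊕ PairIdx r ⊕ Fin (r - 1)) ℤ :=
  fun i j =>
    match j with
    | Sum.inl k => if i = k then 1 else 0
    | Sum.inr (Sum.inl p) => (if i = p.1.1 then 1 else 0) + (if i = p.1.2 then -1 else 0)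
    | Sum.inr (Sum.inr k) =>
        (if (i : ℕ) = 0 then 1 else 0) + (if (i : ℕ) = (k : ℕ) + 1 then 1 else 0)

/-- A "totally-unimodular-type" column: entries in `{-1,0,1}`, at most one `1`
and at most one `-1`. -/
def colF {n : ℕ} (v : Fin n → ℤ) : Prop :=
  (∀ i, v i = -1 ∨ v i = 0 ∨ v i = 1) ∧
  (∀ i j, v i = 1 → v j = 1 → i = j) ∧
  (∀ i j, v i = -1 → v j = -1 → i = j)

/-- The column `e_z + e_k`. -/
def eB {n : ℕ} (z k : Fin n) : Fin n → ℤ :=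
  fun i => (if i = z then 1 else 0) + (if i = k then 1 else 0)

lemma colF_single {n : ℕ} (a : Fin n) : colF (fun i => if i = a then (1:ℤ) else 0) := by
  refine ⟨fun i => ?_, fun i j hi hj => ?_, fun i j hi hj => ?_⟩
  · dsimp only; split_ifs <;> norm_num
  · dsimp only at hi hj
    split_ifs at hi hj with h1 h2
    · exact h1.trans h2.symm
    all_goals simp_all
  · dsimp only at hi; split_ifs at hi <;> norm_num at hi

lemma colF_sub {n : ℕ} (a b : Fin n) :
    colF (fun i => (if i = a then (1:ℤ) else 0) - (if i = b then 1 else 0)) := by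
  have hval : ∀ i, (if i = a then (1:ℤ) else 0) - (if i = b then 1 else 0) = 1 → i = a ∧ i ≠ b := by
    intro i h; split_ifs at h with h1 h2 h2 <;> [skip; exact ⟨h1, h2⟩; norm_num at h; norm_num at h]
    norm_num at h
  have hval' : ∀ i, (if i = a then (1:ℤ) else 0) - (if i = b then 1 else 0) = -1 → i = b ∧ i ≠ a := by
    intro i h; split_ifs at h with h1 h2 h2 <;> [norm_num at h; norm_num at h; exact ⟨h2, h1⟩; norm_num at h]
  refine ⟨fun i => ?_, fun i j hi hj => ?_, fun i j hi hj => ?_⟩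
  · dsimp only; split_ifs <;> norm_num
  · exact (hval i hi).1.trans (hval j hj).1.symm
  · exact (hval' i hi).1.trans (hval' j hj).1.symm

lemma colF_comp {n m : ℕ} {v : Fin n → ℤ} (hv : colF v) {ρ : Fin m → Fin n}
    (hρ : Function.Injective ρ) : colF (v ∘ ρ) :=
  ⟨fun i => hv.1 (ρ i), fun i j hi hj => hρ (hv.2.1 _ _ hi hj),
   fun i j hi hj => hρ (hv.2.2 _ _ hi hj)⟩

/-- Total unimodularity: a square integer matrix all of whose columns are of type `colF`
has determinant of absolute value at most 1. -/
lemma tu_det : ∀ (n : ℕ) (M : Matrix (Fin n) (Fin n) ℤ),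
    (∀ c, colF (fun i => M i c)) → |M.det| ≤ 1 := by
  intro n
  induction n with
  | zero => intro M _; simp [Matrix.det_fin_zero]
  | succ n ih =>
    intro M hM
    by_cases h0 : ∃ c, ∀ i, M i c = 0
    · obtain ⟨c, hc⟩ := h0
      rw [Matrix.det_eq_zero_of_column_eq_zero c hc]; norm_num
    by_cases h1 : ∃ c i, M i c ≠ 0 ∧ ∀ i', i' ≠ i → M i' c = 0
    · obtain ⟨c, i0, hi0, hother⟩ := h1
      rw [Matrix.det_succ_column M c,
        Finset.sum_eq_single_of_mem i0 (Finset.mem_univ i0)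
          (fun b _ hb => by rw [hother b hb]; ring)]
      have habs : |M i0 c| = 1 := by
        rcases (hM c).1 i0 with h | h | h
        · rw [show M i0 c = -1 from h]; norm_num
        · exact absurd h hi0
        · rw [show M i0 c = 1 from h]; norm_num
      have hminor : |(M.submatrix i0.succAbove c.succAbove).det| ≤ 1 := by
        apply ih
        intro c'
        exact colF_comp (hM (c.succAbove c')) Fin.succAbove_right_injective
      calc |(-1 : ℤ) ^ ((i0 : ℕ) + (c : ℕ)) * M i0 c * (M.submatrix i0.succAbove c.succAbove).det|
          = |(-1 : ℤ) ^ ((i0 : ℕ) + (c : ℕ))| * |M i0 c| * |(M.submatrix i0.succAbove c.succAbove).det| := by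
            rw [abs_mul, abs_mul]
        _ ≤ 1 := by
            rw [abs_pow, abs_neg, abs_one, one_pow, one_mul, habs, one_mul]
            exact hminor
    · -- every column has at least two nonzero entries, hence one `1` and one `-1`,
      -- so all column sums vanish and the rows are linearly dependent
      push_neg at h0 h1
      have hsum : ∀ c, ∑ i, M i c = 0 := by
        intro c
        obtain ⟨i1, hi1⟩ := h0 c
        obtain ⟨i2, hi2ne, hi2⟩ := h1 c i1 hi1
        have key : ∀ ia ib, ia ≠ ib → M ia c = 1 → M ib c = -1 → ∑ i, M i c = 0 := by
          intro ia ib hne ha hb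
          have hz : ∀ i ∈ Finset.univ, i ∉ ({ia, ib} : Finset (Fin (n+1))) → M i c = 0 := by
            intro i _ hi
            simp only [Finset.mem_insert, Finset.mem_singleton, not_or] at hi
            rcases (hM c).1 i with h | h | h
            · exact absurd ((hM c).2.2 i ib h hb) hi.2
            · exact h
            · exact absurd ((hM c).2.1 i ia h ha) hi.1
          rw [← Finset.sum_subset (Finset.subset_univ ({ia, ib} : Finset (Fin (n+1)))) hz,
            Finset.sum_pair hne, ha, hb]
          ring
        have h1v : M i1 c = 1 ∨ M i1 c = -1 := by
          rcases (hM c).1 i1 with h | h | h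
          · exact Or.inr h
          · exact absurd h hi1
          · exact Or.inl h
        have h2v : M i2 c = 1 ∨ M i2 c = -1 := by
          rcases (hM c).1 i2 with h | h | h
          · exact Or.inr h
          · exact absurd h hi2
          · exact Or.inl h
        rcases h1v with h1v | h1v <;> rcases h2v with h2v | h2v
        · exact absurd ((hM c).2.1 i1 i2 h1v h2v) (fun h => hi2ne h.symm)
        · exact key i1 i2 (fun h => hi2ne h.symm) h1v h2v
        · exact key i2 i1 hi2ne h2v h1v
        · exact absurd ((hM c).2.2 i1 i2 h1v h2v) (fun h => hi2ne h.symm)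
      set cvec : Fin (n+1) → ℤ := fun i => if i = 0 then 0 else -1 with hcvec
      have hrow : (∑ k, cvec k • M k) = M 0 := by
        funext j
        rw [Finset.sum_apply]
        have : ∀ k, (cvec k • M k) j = (if k = 0 then M k j else 0) - M k j := by
          intro k
          simp only [hcvec, Pi.smul_apply, smul_eq_mul]
          split_ifs <;> ring
        rw [Finset.sum_congr rfl (fun k _ => this k), Finset.sum_sub_distrib,
          Finset.sum_ite_eq' Finset.univ (0 : Fin (n+1)) (fun k => M k j), hsum j]
        simp
      have hMeq : M = M.updateRow 0 (∑ k, cvec k • M k) := by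
        rw [hrow, Matrix.updateRow_eq_self]
      rw [hMeq, Matrix.det_updateRow_sum]
      simp [hcvec]

/-- Key lemma: if every column of `M` is either of type `colF` or of the form `e_z + e_k`,
and all the non-`colF` columns lie in a set of size at most `t`, then `|det M| ≤ 2`. -/
lemma main_det : ∀ (t n : ℕ) (z : Fin n) (M : Matrix (Fin n) (Fin n) ℤ) (S : Finset (Fin n)),
    S.card ≤ t →
    (∀ c, c ∉ S → colF (fun i => M i c)) →
    (∀ c, colF (fun i => M i c) ∨ ∃ k, k ≠ z ∧ (fun i => M i c) = eB z k) →
    |M.det| ≤ 2 := by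
  intro t
  induction t with
  | zero =>
    intro n z M S hcard h2 _
    have hS : S = ∅ := Finset.card_eq_zero.mp (Nat.le_antisymm hcard (Nat.zero_le _))
    have : |M.det| ≤ 1 := tu_det n M (fun c => h2 c (by simp [hS]))
    omega
  | succ t ih =>
    intro n z M S hcard h2 h3
    by_cases hall : ∀ c, colF (fun i => M i c)
    · have : |M.det| ≤ 1 := tu_det n M hall
      omega
    push_neg at hall
    obtain ⟨c0, hc0⟩ := hall
    obtain ⟨k0, hk0ne, hcol0⟩ := (h3 c0).resolve_left hc0
    by_cases hone : ∀ c, ¬ colF (fun i => M i c) → c = c0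
    · -- a single bad column: split it by multilinearity
      have hMeq : M = M.updateCol c0 (eB z k0) := by
        rw [← hcol0, Matrix.updateCol_eq_self]
      have hsplit : eB z k0 = (fun i => if i = z then (1:ℤ) else 0) +
          (fun i => if i = k0 then (1:ℤ) else 0) := rfl
      have hd : M.det = (M.updateCol c0 (fun i => if i = z then (1:ℤ) else 0)).det +
          (M.updateCol c0 (fun i => if i = k0 then (1:ℤ) else 0)).det := by
        conv_lhs => rw [hMeq, hsplit]
        exact Matrix.det_updateCol_add M c0 _ _
      have hcolumns : ∀ (u : Fin n → ℤ), colF u →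
          ∀ c, colF (fun i => (M.updateCol c0 u) i c) := by
        intro u hu c
        by_cases hc : c = c0
        · have : (fun i => (M.updateCol c0 u) i c) = u := by
            funext i; simp [Matrix.updateCol_apply, hc]
          rw [this]; exact hu
        · have : (fun i => (M.updateCol c0 u) i c) = (fun i => M i c) := by
            funext i; simp [Matrix.updateCol_apply, hc]
          rw [this]
          by_contra hn
          exact hc (hone c hn)
      have hb1 : |(M.updateCol c0 (fun i => if i = z then (1:ℤ) else 0)).det| ≤ 1 :=
        tu_det n _ (hcolumns _ (colF_single z))
      have hb2 : |(M.updateCol c0 (fun i => if i = k0 then (1:ℤ) else 0)).det| ≤ 1 :=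
        tu_det n _ (hcolumns _ (colF_single k0))
      calc |M.det| ≤ |(M.updateCol c0 (fun i => if i = z then (1:ℤ) else 0)).det| +
            |(M.updateCol c0 (fun i => if i = k0 then (1:ℤ) else 0)).det| := by
              rw [hd]; exact abs_add_le _ _
        _ ≤ 2 := by omega
    · -- at least two bad columns: subtract one from the other
      push_neg at hone
      obtain ⟨c1, hc1bad, hc1ne⟩ := hone
      obtain ⟨k1, _, hcol1⟩ := (h3 c1).resolve_left hc1bad
      set M' := M.updateCol c1 (fun i => M i c1 + (-1 : ℤ) • M i c0) with hM'def
      have hdet : M'.det = M.det := Matrix.det_updateCol_add_smul_self M hc1ne (-1)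
      have hcol1' : (fun i => M' i c1) =
          (fun i => (if i = k1 then (1:ℤ) else 0) - (if i = k0 then 1 else 0)) := by
        funext i
        have hstep : M' i c1 = M i c1 + (-1 : ℤ) • M i c0 := by
          simp [hM'def, Matrix.updateCol_apply]
        rw [hstep, congr_fun hcol1 i, congr_fun hcol0 i]
        simp only [eB, smul_eq_mul]
        ring
      have hcolF1 : colF (fun i => M' i c1) := by rw [hcol1']; exact colF_sub k1 k0
      have hcolother : ∀ c, c ≠ c1 → (fun i => M' i c) = (fun i => M i c) := by
        intro c hc; funext i; simp [hM'def, Matrix.updateCol_apply, hc]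
      have hc1S : c1 ∈ S := by
        by_contra hn
        exact hc1bad (h2 c1 hn)
      rw [← hdet]
      refine ih n z M' (S.erase c1) ?_ ?_ ?_
      · rw [Finset.card_erase_of_mem hc1S]; omega
      · intro c hc
        by_cases hcc : c = c1
        · rw [hcc]; exact hcolF1
        · rw [hcolother c hcc]
          apply h2
          intro hcS
          exact hc (Finset.mem_erase.mpr ⟨hcc, hcS⟩)
      · intro c
        by_cases hcc : c = c1
        · rw [hcc]; exact Or.inl hcolF1
        · rw [hcolother c hcc]; exact h3 c

/-- Every `r × r` submatrix of `A_r` has determinant of absolute value at most `2`,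
i.e. `A_r` is `2`-modular. -/
theorem statement2 (r : ℕ) (hr : 2 ≤ r)
    (f : Fin r → Fin r) (g : Fin r → (Fin r ⊕ PairIdx r ⊕ Fin (r - 1))) :
    |((Amat r).submatrix f g).det| ≤ 2 := by
  by_cases hf : Function.Injective f
  · set z : Fin r := ⟨0, by omega⟩ with hz
    set N : Matrix (Fin r) (Fin r) ℤ := fun i c => Amat r i (g c) with hN
    have hNcols : ∀ c, colF (fun i => N i c) ∨ ∃ k, k ≠ z ∧ (fun i => N i c) = eB z k := by
      intro c
      rcases hgc : g c with k | p | k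
      · left
        have : (fun i => N i c) = (fun i => if i = k then (1:ℤ) else 0) := by
          funext i; simp [hN, Amat, hgc]
        rw [this]; exact colF_single k
      · left
        have : (fun i => N i c) =
            (fun i => (if i = p.1.1 then (1:ℤ) else 0) - (if i = p.1.2 then 1 else 0)) := by
          funext i; simp only [hN, Amat, hgc]; split_ifs <;> ring
        rw [this]; exact colF_sub p.1.1 p.1.2
      · right
        refine ⟨⟨(k : ℕ) + 1, by omega⟩, ?_, ?_⟩
        · intro h
          have := congr_arg Fin.val h
          simp [hz] at this
        · funext i
          simp only [hN, Amat, hgc, eB]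
          congr 1
          · congr 1
            simp [hz, Fin.ext_iff]
          · congr 1
            simp [Fin.ext_iff]
    have hNdet : |N.det| ≤ 2 :=
      main_det r r z N Finset.univ (by simp) (fun c h => absurd (Finset.mem_univ c) h) hNcols
    have hb : Function.Bijective f := Finite.injective_iff_bijective.mp hf
    have hsub : (Amat r).submatrix f g = N.submatrix (Equiv.ofBijective f hb) id := rfl
    rw [hsub, Matrix.det_permute, abs_mul]
    rcases Int.units_eq_one_or (Equiv.Perm.sign (Equiv.ofBijective f hb)) with h | h <;>
      rw [h] <;> simpa using hNdet
  · obtain ⟨a, b, hfeq, hne⟩ := Function.not_injective_iff.mp hf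
    have hrows : ((Amat r).submatrix f g) a = ((Amat r).submatrix f g) b := by
      funext c
      show Amat r (f a) (g c) = Amat r (f b) (g c)
      rw [hfeq]
    rw [Matrix.det_zero_of_row_eq hne hrows]
    norm_num
end

section
/- For each integer r ≥ 2, every r × r submatrix of the matrix A'_r has determinant of absolute value at most 2 (i.e., A'_r is 2-modular). -/
/-- A column with entries in `{-1,0,1}`, at most one `1` and at most one `-1`. -/
def GoodCol {n : ℕ} (c : Fin n → ℤ) : Prop :=
  (∀ i, c i = -1 ∨ c i = 0 ∨ c i = 1) ∧
  (∀ i i', c i = 1 → c i' = 1 → i = i') ∧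
  (∀ i i', c i = -1 → c i' = -1 → i = i')

/-- A 0/1 vector with at most one `1`. -/
def EV {n : ℕ} (v : Fin n → ℤ) : Prop :=
  (∀ i, v i = 0 ∨ v i = 1) ∧ ∀ i i', v i = 1 → v i' = 1 → i = i'

lemma goodCol_comp {n m : ℕ} {c : Fin m → ℤ} (hc : GoodCol c) {e : Fin n → Fin m}
    (he : Function.Injective e) : GoodCol (fun i => c (e i)) :=
  ⟨fun i => hc.1 (e i), fun _ _ h h' => he (hc.2.1 _ _ h h'),
    fun _ _ h h' => he (hc.2.2 _ _ h h')⟩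

lemma goodCol_of_EV_sub {n : ℕ} {E v : Fin n → ℤ} (hE : EV E) (hv : EV v) :
    GoodCol (fun i => E i - v i) := by
  refine ⟨fun i => ?_, fun i i' h h' => ?_, fun i i' h h' => ?_⟩
  · show E i - v i = -1 ∨ E i - v i = 0 ∨ E i - v i = 1
    rcases hE.1 i with h | h <;> rcases hv.1 i with h' | h' <;> omega
  · replace h : E i - v i = 1 := h
    replace h' : E i' - v i' = 1 := h'
    refine hE.2 i i' ?_ ?_
    · rcases hE.1 i with a | a <;> rcases hv.1 i with b | b <;> omega
    · rcases hE.1 i' with a | a <;> rcases hv.1 i' with b | b <;> omega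
  · replace h : E i - v i = -1 := h
    replace h' : E i' - v i' = -1 := h'
    refine hv.2 i i' ?_ ?_
    · rcases hE.1 i with a | a <;> rcases hv.1 i with b | b <;> omega
    · rcases hE.1 i' with a | a <;> rcases hv.1 i' with b | b <;> omega

lemma EV_zero {n : ℕ} : EV (fun _ : Fin n => (0 : ℤ)) :=
  ⟨fun _ => Or.inl rfl, fun _ _ h => by norm_num at h⟩

lemma goodCol_of_EV {n : ℕ} {E : Fin n → ℤ} (hE : EV E) : GoodCol E := by
  have h := goodCol_of_EV_sub hE (EV_zero (n := n))
  simpa using h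

lemma EV_of {n m : ℕ} {f : Fin n → Fin m} (hf : Function.Injective f)
    (p : Fin m → Prop) [DecidablePred p] (hp : ∀ a b, p a → p b → a = b) :
    EV (fun i => if p (f i) then (1 : ℤ) else 0) := by
  constructor
  · intro i
    show (if p (f i) then (1:ℤ) else 0) = 0 ∨ (if p (f i) then (1:ℤ) else 0) = 1
    split <;> simp
  · intro i i' h h'
    replace h : (if p (f i) then (1:ℤ) else 0) = 1 := h
    replace h' : (if p (f i') then (1:ℤ) else 0) = 1 := h'
    have h1 : p (f i) := by by_contra hc; rw [if_neg hc] at h; norm_num at h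
    have h2 : p (f i') := by by_contra hc; rw [if_neg hc] at h'; norm_num at h'
    exact hf (hp _ _ h1 h2)

/-- Total unimodularity lemma: a square integer matrix all of whose columns are
`GoodCol` has determinant in `{-1,0,1}`. -/
lemma tu : ∀ (n : ℕ) (M : Matrix (Fin n) (Fin n) ℤ),
    (∀ j, GoodCol (fun i => M i j)) → |M.det| ≤ 1 := by
  intro n
  induction n with
  | zero => intro M _; simp [Matrix.det_fin_zero]
  | succ n ih =>
    intro M hM
    have hM1 : ∀ j i, M i j = -1 ∨ M i j = 0 ∨ M i j = 1 := fun j i => (hM j).1 i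
    have hM2 : ∀ j i i', M i j = 1 → M i' j = 1 → i = i' := fun j => (hM j).2.1
    have hM3 : ∀ j i i', M i j = -1 → M i' j = -1 → i = i' := fun j => (hM j).2.2
    by_cases hall : ∀ j, (∃ i, M i j = 1) ∧ (∃ i, M i j = -1)
    · have hdet : M.det = 0 := by
        rw [← Matrix.exists_vecMul_eq_zero_iff]
        refine ⟨fun _ => 1, ?_, ?_⟩
        · intro h
          have := congrFun h 0
          norm_num at this
        · funext j
          obtain ⟨⟨ip, hip⟩, ⟨im, him⟩⟩ := hall j
          have hval : ∀ i, M i j =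
              (if i = ip then 1 else 0) + (if i = im then -1 else 0) := by
            intro i
            rcases hM1 j i with h | h | h
            · have h1 : i = im := hM3 j i im h him
              have h2 : i ≠ ip := by
                intro hh; rw [hh] at h; rw [h] at hip; norm_num at hip
              rw [h, if_neg h2, if_pos h1]; ring
            · have h1 : i ≠ ip := by
                intro hh; rw [hh] at h; rw [h] at hip; norm_num at hip
              have h2 : i ≠ im := by
                intro hh; rw [hh] at h; rw [h] at him; norm_num at him
              rw [h, if_neg h1, if_neg h2]; ring
            · have h1 : i = ip := hM2 j i ip h hip
              have h2 : i ≠ im := by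
                intro hh; rw [hh] at h; rw [h] at him; norm_num at him
              rw [h, if_pos h1, if_neg h2]; ring
          show Matrix.vecMul (fun _ => (1:ℤ)) M j = 0
          simp only [Matrix.vecMul, dotProduct, one_mul]
          calc ∑ i, M i j
              = ∑ i, ((if i = ip then (1:ℤ) else 0) + (if i = im then -1 else 0)) :=
                Finset.sum_congr rfl (fun i _ => hval i)
            _ = 0 := by rw [Finset.sum_add_distrib]; simp
      rw [hdet]; norm_num
    · push_neg at hall
      obtain ⟨j, hj⟩ := hall
      have hex : ∃ i0 : Fin (n + 1), ∀ i, i ≠ i0 → M i j = 0 := by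
        by_cases hnz : ∃ i, M i j ≠ 0
        · obtain ⟨i1, h1⟩ := hnz
          refine ⟨i1, fun i hi => ?_⟩
          by_contra h2
          by_cases hpos : ∃ i, M i j = 1
          · have h := hj hpos
            have a1 : M i j = 1 := by
              rcases hM1 j i with a | a | a
              · exact absurd a (h i)
              · exact absurd a h2
              · exact a
            have a2 : M i1 j = 1 := by
              rcases hM1 j i1 with a | a | a
              · exact absurd a (h i1)
              · exact absurd a h1
              · exact a
            exact hi (hM2 j i i1 a1 a2)
          · push_neg at hpos
            have a1 : M i j = -1 := by
              rcases hM1 j i with a | a | a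
              · exact a
              · exact absurd a h2
              · exact absurd a (hpos i)
            have a2 : M i1 j = -1 := by
              rcases hM1 j i1 with a | a | a
              · exact a
              · exact absurd a h1
              · exact absurd a (hpos i1)
            exact hi (hM3 j i i1 a1 a2)
        · push_neg at hnz
          exact ⟨0, fun i _ => hnz i⟩
      obtain ⟨i0, hi0⟩ := hex
      rw [Matrix.det_succ_column M j,
        Finset.sum_eq_single i0
          (fun i _ hi => by rw [hi0 i hi]; ring)
          (fun h => absurd (Finset.mem_univ i0) h)]
      have hm : |(M.submatrix i0.succAbove j.succAbove).det| ≤ 1 :=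
        ih _ (fun j' => goodCol_comp (hM (j.succAbove j')) Fin.succAbove_right_injective)
      have habs : |M i0 j| ≤ 1 := by
        rcases hM1 j i0 with a | a | a <;> rw [a] <;> norm_num
      rw [abs_mul, abs_mul]
      have h3 : |(-1 : ℤ) ^ ((i0 : ℕ) + (j : ℕ))| = 1 := by
        rw [abs_pow]; norm_num
      rw [h3, one_mul]
      calc |M i0 j| * |(M.submatrix i0.succAbove j.succAbove).det| ≤ 1 * 1 :=
            mul_le_mul habs hm (abs_nonneg _) zero_le_one
        _ = 1 := one_mul 1

/-- Main reduction lemma: if all but the columns indexed by `S` are `GoodCol`,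
and columns in `S` have the form `E1 + E2 - v` with `v` a unit-or-zero vector,
then the determinant is at most `2` in absolute value. -/
lemma main_aux {n : ℕ} (E1 E2 : Fin n → ℤ) (hE1 : EV E1) (hE2 : EV E2) :
    ∀ (k : ℕ) (M : Matrix (Fin n) (Fin n) ℤ) (S : Finset (Fin n)), S.card ≤ k →
      (∀ j ∉ S, GoodCol (fun i => M i j)) →
      (∀ j ∈ S, ∃ v, EV v ∧ ∀ i, M i j = E1 i + E2 i - v i) →
      |M.det| ≤ 2 := by
  intro k
  induction k with
  | zero =>
    intro M S hcard hgood _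
    have hS : S = ∅ := Finset.card_eq_zero.mp (Nat.le_zero.mp hcard)
    have := tu n M (fun j => hgood j (by simp [hS]))
    omega
  | succ k ih =>
    intro M S hcard hgood hspec
    by_cases h2 : ∃ j1 ∈ S, ∃ j2 ∈ S, j1 ≠ j2
    · obtain ⟨j1, hj1, j2, hj2, hne⟩ := h2
      obtain ⟨v1, hv1, hc1⟩ := hspec j1 hj1
      obtain ⟨v2, hv2, hc2⟩ := hspec j2 hj2
      have key : (M.updateCol j2 (fun i => M i j2 + (-1 : ℤ) • M i j1)).det = M.det :=
        Matrix.det_updateCol_add_smul_self M hne.symm (-1)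
      set M' := M.updateCol j2 (fun i => M i j2 + (-1 : ℤ) • M i j1) with hM'
      have hb : |M'.det| ≤ 2 := by
        apply ih M' (S.erase j2)
        · rw [Finset.card_erase_of_mem hj2]
          have : 1 ≤ S.card := Finset.card_pos.mpr ⟨j2, hj2⟩
          omega
        · intro j hj
          rcases eq_or_ne j j2 with rfl | hjne
          · have hcol : (fun i => M' i j) = fun i => v1 i - v2 i := by
              funext i
              rw [hM', Matrix.updateCol_self, hc1 i, hc2 i]
              simp only [smul_eq_mul]
              ring
            rw [hcol]; exact goodCol_of_EV_sub hv1 hv2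
          · have hjS : j ∉ S := fun hS => hj (Finset.mem_erase.mpr ⟨hjne, hS⟩)
            have hcol : (fun i => M' i j) = fun i => M i j := by
              funext i; exact Matrix.updateCol_ne hjne
            rw [hcol]; exact hgood j hjS
        · intro j hj
          obtain ⟨hjne, hjS⟩ := Finset.mem_erase.mp hj
          obtain ⟨v, hv, hc⟩ := hspec j hjS
          exact ⟨v, hv, fun i => by
            rw [show M' i j = M i j from Matrix.updateCol_ne hjne]; exact hc i⟩
      rw [← key]
      exact hb
    · push_neg at h2
      rcases Finset.eq_empty_or_nonempty S with hS | ⟨j0, hj0⟩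
      · have := tu n M (fun j => hgood j (by simp [hS]))
        omega
      · obtain ⟨v, hv, hcol⟩ := hspec j0 hj0
        have e : M = M.updateCol j0 ((fun i => E1 i - v i) + fun i => E2 i) := by
          ext i j
          rw [Matrix.updateCol_apply]
          split
          · next h => rw [h, hcol i]; simp; ring
          · rfl
        have hdet : M.det = (M.updateCol j0 (fun i => E1 i - v i)).det +
            (M.updateCol j0 (fun i => E2 i)).det := by
          conv_lhs => rw [e]
          rw [Matrix.det_updateCol_add]
        have hgood' : ∀ j ≠ j0, GoodCol (fun i => M i j) := by
          intro j hj
          refine hgood j (fun hjS => hj (h2 j hjS j0 hj0))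
        have h1 : |(M.updateCol j0 (fun i => E1 i - v i)).det| ≤ 1 := by
          apply tu
          intro j
          rcases eq_or_ne j j0 with rfl | hjne
          · have hc : (fun i => (M.updateCol j (fun i => E1 i - v i)) i j) =
                fun i => E1 i - v i := by
              funext i; rw [Matrix.updateCol_self]
            rw [hc]; exact goodCol_of_EV_sub hE1 hv
          · have hc : (fun i => (M.updateCol j0 (fun i => E1 i - v i)) i j) =
                fun i => M i j := by
              funext i; exact Matrix.updateCol_ne hjne
            rw [hc]; exact hgood' j hjne
        have hE2' : |(M.updateCol j0 (fun i => E2 i)).det| ≤ 1 := by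
          apply tu
          intro j
          rcases eq_or_ne j j0 with rfl | hjne
          · have hc : (fun i => (M.updateCol j (fun i => E2 i)) i j) =
                fun i => E2 i := by
              funext i; rw [Matrix.updateCol_self]
            rw [hc]; exact goodCol_of_EV hE2
          · have hc : (fun i => (M.updateCol j0 (fun i => E2 i)) i j) =
                fun i => M i j := by
              funext i; exact Matrix.updateCol_ne hjne
            rw [hc]; exact hgood' j hjne
        rw [hdet]
        calc |(M.updateCol j0 (fun i => E1 i - v i)).det +
            (M.updateCol j0 (fun i => E2 i)).det|
            ≤ |(M.updateCol j0 (fun i => E1 i - v i)).det| +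
              |(M.updateCol j0 (fun i => E2 i)).det| := abs_add_le _ _
          _ ≤ 2 := by omega

/-- The matrix `A'_r = [I_r | D_r | C_r | w]`, where the columns of `D_r` are the vectors
`e_i - e_j` for `i < j`, the `j`-th column of `C_r` is `e_1 + e_2 - e_{j+2}`, and
`w = e_1 + e_2`. -/
def A'mat (r : ℕ) : Matrix (Fin r) (Fin r ⊕ PairIdx r ⊕ Fin (r - 2) ⊕ Unit) ℤ :=
  fun i j =>
    match j with
    | Sum.inl k => if i = k then 1 else 0
    | Sum.inr (Sum.inl p) => (if i = p.1.1 then 1 else 0) + (if i = p.1.2 then -1 else 0)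
    | Sum.inr (Sum.inr (Sum.inl k)) =>
        (if (i : ℕ) = 0 then 1 else 0) + (if (i : ℕ) = 1 then 1 else 0)
          - (if (i : ℕ) = (k : ℕ) + 2 then 1 else 0)
    | Sum.inr (Sum.inr (Sum.inr _)) =>
        (if (i : ℕ) = 0 then 1 else 0) + (if (i : ℕ) = 1 then 1 else 0)

/-- Every `r × r` submatrix of `A'_r` has determinant of absolute value at most `2`,
i.e. `A'_r` is `2`-modular. -/
theorem statement3 (r : ℕ) (hr : 2 ≤ r)
    (f : Fin r → Fin r) (g : Fin r → (Fin r ⊕ PairIdx r ⊕ Fin (r - 2) ⊕ Unit)) :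
    |((A'mat r).submatrix f g).det| ≤ 2 := by
  classical
  by_cases hf : Function.Injective f
  · set M := (A'mat r).submatrix f g with hMdef
    set E1 : Fin r → ℤ := fun i => if (f i : ℕ) = 0 then 1 else 0 with hE1def
    set E2 : Fin r → ℤ := fun i => if (f i : ℕ) = 1 then 1 else 0 with hE2def
    have hE1 : EV E1 := EV_of hf (fun a => (a : ℕ) = 0)
      (fun a b ha hb => Fin.val_injective (ha.trans hb.symm))
    have hE2 : EV E2 := EV_of hf (fun a => (a : ℕ) = 1)
      (fun a b ha hb => Fin.val_injective (ha.trans hb.symm))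
    set S : Finset (Fin r) :=
      Finset.univ.filter (fun j => ∃ x, g j = Sum.inr (Sum.inr x)) with hSdef
    apply main_aux E1 E2 hE1 hE2 r M S
    · exact (Finset.card_filter_le _ _).trans (by simp)
    · intro j hj
      rcases hgj : g j with k | p | k | u
      · have hc : (fun i => M i j) = fun i => if f i = k then (1:ℤ) else 0 := by
          funext i
          show A'mat r (f i) (g j) = _
          rw [hgj]
          rfl
        rw [hc]
        exact goodCol_of_EV (EV_of hf (fun a => a = k) (fun a b ha hb => ha.trans hb.symm))
      · have hc : (fun i => M i j) = fun i =>
            (if f i = p.1.1 then (1:ℤ) else 0) - (if f i = p.1.2 then 1 else 0) := by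
          funext i
          show A'mat r (f i) (g j) = _
          rw [hgj]
          show (if f i = p.1.1 then (1:ℤ) else 0) + (if f i = p.1.2 then -1 else 0) = _
          split <;> split <;> ring
        rw [hc]
        exact goodCol_of_EV_sub
          (EV_of hf (fun a => a = p.1.1) (fun a b ha hb => ha.trans hb.symm))
          (EV_of hf (fun a => a = p.1.2) (fun a b ha hb => ha.trans hb.symm))
      · exact absurd (Finset.mem_filter.mpr ⟨Finset.mem_univ j, ⟨Sum.inl k, hgj⟩⟩) hj
      · exact absurd (Finset.mem_filter.mpr ⟨Finset.mem_univ j, ⟨Sum.inr u, hgj⟩⟩) hj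
    · intro j hj
      have hsp := (Finset.mem_filter.mp hj).2
      obtain ⟨x, hgj⟩ := hsp
      rcases x with k | u
      · refine ⟨fun i => if (f i : ℕ) = (k : ℕ) + 2 then (1:ℤ) else 0,
          EV_of hf (fun a => (a : ℕ) = (k : ℕ) + 2)
            (fun a b ha hb => Fin.val_injective (ha.trans hb.symm)), fun i => ?_⟩
        show A'mat r (f i) (g j) = _
        rw [hgj]
        rfl
      · refine ⟨fun _ => 0, EV_zero, fun i => ?_⟩
        show A'mat r (f i) (g j) = _
        rw [hgj]
        show (if (f i : ℕ) = 0 then (1:ℤ) else 0) + (if (f i : ℕ) = 1 then 1 else 0) = _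
        ring
  · rw [Function.not_injective_iff] at hf
    obtain ⟨a, b, hab, hne⟩ := hf
    rw [Matrix.det_zero_of_row_eq hne (by
      funext j
      show A'mat r (f a) (g j) = A'mat r (f b) (g j)
      rw [hab])]
    norm_num
end

section
/- For each integer r ≥ 3, every r × r submatrix of the matrix H_r = [I_r | D_r | v] has determinant of absolute value at most 2 (i.e., H_r is 2-modular). -/
/-- The matrix `H_r = [I_r | D_r | v]`, where the columns of `D_r` are the vectors
`e_i - e_j` for `i < j`, and `v = e_1 - e_2 - e_3`. -/
def Hmat (r : ℕ) : Matrix (Fin r) (Fin r ⊕ PairIdx r ⊕ Unit) ℤ :=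
  fun i j =>
    match j with
    | Sum.inl k => if i = k then 1 else 0
    | Sum.inr (Sum.inl p) => (if i = p.1.1 then 1 else 0) + (if i = p.1.2 then -1 else 0)
    | Sum.inr (Sum.inr _) =>
        (if (i : ℕ) = 0 then 1 else 0) - (if (i : ℕ) = 1 then 1 else 0)
          - (if (i : ℕ) = 2 then 1 else 0)

/-- The matrix `D_s` whose columns are `e_i - e_j` for `i < j`. -/
def Dmat (s : ℕ) : Matrix (Fin s) (PairIdx s) ℤ :=
  fun i p => (if i = p.1.1 then 1 else 0) + (if i = p.1.2 then -1 else 0)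

lemma mem_range_signType_mul {a b : ℤ}
    (ha : a ∈ Set.range (SignType.cast : SignType → ℤ))
    (hb : b ∈ Set.range (SignType.cast : SignType → ℤ)) :
    a * b ∈ Set.range (SignType.cast : SignType → ℤ) := by
  obtain ⟨sa, rfl⟩ := ha
  obtain ⟨sb, rfl⟩ := hb
  exact ⟨sa * sb, by push_cast; ring⟩

lemma neg_one_pow_mem_range_signType (m : ℕ) :
    ((-1 : ℤ) ^ m) ∈ Set.range (SignType.cast : SignType → ℤ) := by
  rcases Nat.even_or_odd m with h | h
  · rw [h.neg_one_pow]; exact ⟨1, rfl⟩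
  · rw [h.neg_one_pow]; exact ⟨-1, by simp⟩

lemma det_of_single_col {k : ℕ} (M : Matrix (Fin (k + 1)) (Fin (k + 1)) ℤ)
    (x i0 : Fin (k + 1)) (c : ℤ) (h : ∀ i, M i x = if i = i0 then c else 0) :
    M.det = (-1) ^ (i0 + x : ℕ) * c * (M.submatrix i0.succAbove x.succAbove).det := by
  rw [Matrix.det_succ_column M x]
  rw [Fintype.sum_eq_single i0 (fun i hi => by rw [h i, if_neg hi]; ring)]
  rw [h i0, if_pos rfl]

/-- `D_s` is totally unimodular. -/
lemma Dmat_aux (s : ℕ) :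
    ∀ k (f : Fin k → Fin s) (g : Fin k → PairIdx s), Function.Injective f →
      ((Dmat s).submatrix f g).det ∈ Set.range (SignType.cast : SignType → ℤ) := by
  intro k
  induction k with
  | zero => intro f g hf; exact ⟨1, by simp [Matrix.det_fin_zero]⟩
  | succ k ih =>
    intro f g hf
    by_cases H : ∀ x : Fin (k + 1), (∃ i, f i = (g x).1.1) ∧ (∃ i, f i = (g x).1.2)
    · -- all columns have both endpoints among the rows: rows sum to zero, det = 0
      refine ⟨0, ?_⟩
      simp only [SignType.coe_zero]
      by_contra hd
      have hv : Matrix.vecMul (fun _ => (1 : ℤ)) ((Dmat s).submatrix f g) = 0 := by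
        funext x
        obtain ⟨⟨i1, hi1⟩, ⟨i2, hi2⟩⟩ := H x
        have h12 : i1 ≠ i2 := by
          intro h; rw [h, hi2] at hi1
          exact absurd hi1 (g x).2.ne'
        have : ∀ i, ((Dmat s).submatrix f g) i x
            = (if i = i1 then 1 else 0) + (if i = i2 then -1 else 0) := by
          intro i
          simp only [Matrix.submatrix_apply, Dmat]
          simp only [← hi1, ← hi2, hf.eq_iff]
        simp only [Matrix.vecMul, dotProduct, one_mul, Pi.zero_apply]
        simp_rw [this]
        rw [Finset.sum_add_distrib, Finset.sum_ite_eq' Finset.univ i1,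
          Finset.sum_ite_eq' Finset.univ i2]
        simp
      have := Matrix.eq_zero_of_vecMul_eq_zero (Ne.symm hd) hv
      have h0 := congrFun this 0
      simp at h0
    · push_neg at H
      obtain ⟨x, hx⟩ := H
      by_cases h1 : ∃ i, f i = (g x).1.1
      · -- first endpoint hit, second not
        have h2 : ∀ i, f i ≠ (g x).1.2 := hx h1
        obtain ⟨i0, hi0⟩ := h1
        have hcol : ∀ i, ((Dmat s).submatrix f g) i x = if i = i0 then 1 else 0 := by
          intro i
          simp only [Matrix.submatrix_apply, Dmat]
          simp only [if_neg (h2 i), ← hi0, hf.eq_iff, add_zero]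
        rw [det_of_single_col _ x i0 1 hcol, mul_one]
        exact mem_range_signType_mul (neg_one_pow_mem_range_signType _)
          (ih _ _ (hf.comp (Fin.succAbove_right_injective)))
      · by_cases h2 : ∃ i, f i = (g x).1.2
        · obtain ⟨i0, hi0⟩ := h2
          push_neg at h1
          have hcol : ∀ i, ((Dmat s).submatrix f g) i x = if i = i0 then -1 else 0 := by
            intro i
            simp only [Matrix.submatrix_apply, Dmat]
            simp only [if_neg (h1 i), ← hi0, hf.eq_iff, zero_add]
          rw [det_of_single_col _ x i0 (-1) hcol]
          refine mem_range_signType_mul (mem_range_signType_mul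
            (neg_one_pow_mem_range_signType _) ⟨-1, by simp⟩) ?_
          exact ih _ _ (hf.comp (Fin.succAbove_right_injective))
        · -- column is zero
          push_neg at h1 h2
          refine ⟨0, ?_⟩
          simp only [SignType.coe_zero]
          symm
          apply Matrix.det_eq_zero_of_column_eq_zero x
          intro i
          simp only [Matrix.submatrix_apply, Dmat, if_neg (h1 i), if_neg (h2 i), add_zero]

lemma Dmat_TU (s : ℕ) : (Dmat s).IsTotallyUnimodular := by
  rw [Matrix.isTotallyUnimodular_iff]
  intro k f g
  by_cases hf : Function.Injective f
  · exact Dmat_aux s k f g hf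
  · refine ⟨0, ?_⟩
    simp only [SignType.coe_zero]
    obtain ⟨i, j, hij, hne⟩ := Function.not_injective_iff.mp hf
    symm
    rw [← Matrix.det_transpose]
    exact Matrix.det_zero_of_column_eq hne (fun x => by
      simp [Matrix.submatrix_apply, hij])

/-- The matrix `[I_r | D_r]`. -/
def Emat (r : ℕ) : Matrix (Fin r) (Fin r ⊕ PairIdx r) ℤ :=
  fun i j =>
    match j with
    | Sum.inl k => if i = k then 1 else 0
    | Sum.inr p => (if i = p.1.1 then 1 else 0) + (if i = p.1.2 then -1 else 0)

/-- Column embedding realizing `[I_r | D_r]` inside `D_{r+1}`. -/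
def colmap (r : ℕ) : (Fin r ⊕ PairIdx r) → PairIdx (r + 1) :=
  fun j =>
    match j with
    | Sum.inl k => ⟨(k.castSucc, Fin.last r), Fin.castSucc_lt_last k⟩
    | Sum.inr p => ⟨(p.1.1.castSucc, p.1.2.castSucc), by
        simpa [Fin.castSucc_lt_castSucc_iff] using p.2⟩

lemma Emat_eq (r : ℕ) : Emat r = (Dmat (r + 1)).submatrix Fin.castSucc (colmap r) := by
  ext i j
  cases j with
  | inl k =>
    simp [Emat, Dmat, colmap, Matrix.submatrix_apply, Fin.castSucc_inj,
      (Fin.castSucc_lt_last i).ne]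
  | inr p =>
    simp [Emat, Dmat, colmap, Matrix.submatrix_apply, Fin.castSucc_inj]

lemma Emat_TU (r : ℕ) : (Emat r).IsTotallyUnimodular := by
  rw [Emat_eq]
  exact (Dmat_TU (r + 1)).submatrix _ _

lemma abs_le_one_of_TU {m n : Type*} [Fintype m] [DecidableEq m]
    {A : Matrix m n ℤ} (hA : A.IsTotallyUnimodular)
    {k : ℕ} (f : Fin k → m) (g : Fin k → n) :
    |(A.submatrix f g).det| ≤ 1 := by
  rw [Matrix.isTotallyUnimodular_iff] at hA
  obtain ⟨s, hs⟩ := hA k f g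
  rw [← hs]
  cases s <;> simp

/-- Every `r × r` submatrix of `H_r` has determinant of absolute value at most `2`,
i.e. `H_r` is `2`-modular. -/
theorem statement4 (r : ℕ) (hr : 3 ≤ r)
    (f : Fin r → Fin r) (g : Fin r → (Fin r ⊕ PairIdx r ⊕ Unit)) :
    |((Hmat r).submatrix f g).det| ≤ 2 := by
  classical
  -- translate non-`v` columns
  set g' : Fin r → (Fin r ⊕ PairIdx r) := fun x =>
    match g x with
    | Sum.inl k => Sum.inl k
    | Sum.inr (Sum.inl p) => Sum.inr p
    | Sum.inr (Sum.inr _) => Sum.inl ⟨0, by omega⟩ with hg'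
  by_cases h1 : ∃ x, g x = Sum.inr (Sum.inr ())
  · obtain ⟨x0, hx0⟩ := h1
    by_cases h2 : ∃ y, y ≠ x0 ∧ g y = Sum.inr (Sum.inr ())
    · -- two equal columns
      obtain ⟨y, hyx, hy⟩ := h2
      have : ((Hmat r).submatrix f g).det = 0 := by
        apply Matrix.det_zero_of_column_eq hyx
        intro i
        simp [Matrix.submatrix_apply, hy, hx0]
      rw [this]; norm_num
    · -- exactly one `v` column: expand by multilinearity
      push_neg at h2
      have a : Fin r := ⟨0, by omega⟩
      set A : Fin r := ⟨0, by omega⟩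
      set B : Fin r := ⟨1, by omega⟩
      set C : Fin r := ⟨2, by omega⟩
      have hAB : A < B := by simp [A, B, Fin.lt_def]
      set u : Fin r → ℤ := fun i => (if f i = A then 1 else 0) + (if f i = B then -1 else 0)
        with hu
      set w : Fin r → ℤ := fun i => if f i = C then 1 else 0 with hw
      have hM : (Hmat r).submatrix f g
          = ((Hmat r).submatrix f g).updateCol x0 (u + (-1 : ℤ) • w) := by
        ext i x
        rw [Matrix.updateCol_apply]
        split
        · rename_i hxx0
          subst hxx0
          simp only [Matrix.submatrix_apply, hx0, Hmat, Pi.add_apply, Pi.smul_apply,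
            smul_eq_mul, hu, hw]
          have e1 : (f i = A) ↔ ((f i : ℕ) = 0) := by simp [A, Fin.ext_iff]
          have e2 : (f i = B) ↔ ((f i : ℕ) = 1) := by simp [B, Fin.ext_iff]
          have e3 : (f i = C) ↔ ((f i : ℕ) = 2) := by simp [C, Fin.ext_iff]
          simp only [e1, e2, e3]
          split_ifs <;> norm_num
        · rfl
      set M1 := ((Hmat r).submatrix f g).updateCol x0 u with hM1
      set M2 := ((Hmat r).submatrix f g).updateCol x0 w with hM2
      have hsplit : ((Hmat r).submatrix f g).det = M1.det + (-1) * M2.det := by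
        conv_lhs => rw [hM]
        rw [Matrix.det_updateCol_add, Matrix.det_updateCol_smul]
      -- M1 is a submatrix of Emat
      have hM1e : M1 = (Emat r).submatrix f
          (fun x => if x = x0 then Sum.inr ⟨(A, B), hAB⟩ else g' x) := by
        ext i x
        rw [hM1, Matrix.updateCol_apply]
        by_cases hxx : x = x0
        · subst hxx; simp [Matrix.submatrix_apply, Emat, hu]
        · simp only [if_neg hxx, Matrix.submatrix_apply]
          have hgx := h2 x hxx
          cases hgx' : g x with
          | inl k => simp [hg', hgx', Hmat, Emat]
          | inr q =>
            cases q with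
            | inl p => simp [hg', hgx', Hmat, Emat]
            | inr u => exact absurd (by rw [hgx']) hgx
      have hM2e : M2 = (Emat r).submatrix f
          (fun x => if x = x0 then Sum.inl C else g' x) := by
        ext i x
        rw [hM2, Matrix.updateCol_apply]
        by_cases hxx : x = x0
        · subst hxx; simp [Matrix.submatrix_apply, Emat, hw]
        · simp only [if_neg hxx, Matrix.submatrix_apply]
          have hgx := h2 x hxx
          cases hgx' : g x with
          | inl k => simp [hg', hgx', Hmat, Emat]
          | inr q =>
            cases q with
            | inl p => simp [hg', hgx', Hmat, Emat]
            | inr u => exact absurd (by rw [hgx']) hgx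
      have b1 : |M1.det| ≤ 1 := by rw [hM1e]; exact abs_le_one_of_TU (Emat_TU r) _ _
      have b2 : |M2.det| ≤ 1 := by rw [hM2e]; exact abs_le_one_of_TU (Emat_TU r) _ _
      rw [hsplit]
      calc |M1.det + (-1) * M2.det| ≤ |M1.det| + |(-1) * M2.det| := abs_add_le _ _
        _ = |M1.det| + |M2.det| := by rw [abs_mul, abs_neg, abs_one, one_mul]
        _ ≤ 2 := by linarith
  · -- no `v` column
    push_neg at h1
    have : (Hmat r).submatrix f g = (Emat r).submatrix f g' := by
      ext i x
      have hgx := h1 x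
      simp only [Matrix.submatrix_apply]
      cases hgx' : g x with
      | inl k => simp [hg', hgx', Hmat, Emat]
      | inr q =>
        cases q with
        | inl p => simp [hg', hgx', Hmat, Emat]
        | inr u => exact absurd (by rw [hgx']) hgx
    rw [this]
    have := abs_le_one_of_TU (Emat_TU r) f g'
    linarith
end

section
/- There is no 4 × 8 integer matrix A with the following properties: A has rank 4 over ℚ; every 4 × 4 submatrix of A has determinant of absolute value at most 2; the space spanned over ℚ by columns 1–4 of A has dimension 2 and every two of these four columns are linearly independent; and the space spanned over ℚ by columns 5–8 of A has dimension 2 and every two of these four columns are linearly independent. (Equivalently, the matroid U_{2,4} ⊕ U_{2,4} has no 2-modular representation over ℝ.) -/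
/-- A column of an integer matrix, viewed as a vector over `ℚ`. -/
def colQ {m n : ℕ} (A : Matrix (Fin m) (Fin n) ℤ) (j : Fin n) : Fin m → ℚ :=
  fun i => (A i j : ℚ)

/-! ### Auxiliary determinant machinery -/

/-- The determinant of the `4 × 4` matrix with rows `u, v, w, z`. -/
noncomputable def DD (u v w z : Fin 4 → ℚ) : ℚ := Matrix.det (Matrix.of ![u, v, w, z])

lemma upd0 (a b w z x : Fin 4 → ℚ) :
    (Matrix.of ![a, b, w, z]).updateRow 0 x = Matrix.of ![x, b, w, z] := by
  ext i j; fin_cases i <;> simp [Matrix.updateRow_apply]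

lemma upd1 (a b w z x : Fin 4 → ℚ) :
    (Matrix.of ![a, b, w, z]).updateRow 1 x = Matrix.of ![a, x, w, z] := by
  ext i j; fin_cases i <;> simp [Matrix.updateRow_apply]

lemma upd2 (a b w z x : Fin 4 → ℚ) :
    (Matrix.of ![a, b, w, z]).updateRow 2 x = Matrix.of ![a, b, x, z] := by
  ext i j; fin_cases i <;> simp [Matrix.updateRow_apply]

lemma upd3 (a b w z x : Fin 4 → ℚ) :
    (Matrix.of ![a, b, w, z]).updateRow 3 x = Matrix.of ![a, b, w, x] := by
  ext i j; fin_cases i <;> simp [Matrix.updateRow_apply]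

lemma DD_add0 (b w z x y : Fin 4 → ℚ) : DD (x + y) b w z = DD x b w z + DD y b w z := by
  simpa [upd0, DD] using Matrix.det_updateRow_add (Matrix.of ![x, b, w, z]) 0 x y

lemma DD_smul0 (b w z x : Fin 4 → ℚ) (p : ℚ) : DD (p • x) b w z = p * DD x b w z := by
  simpa [upd0, DD] using Matrix.det_updateRow_smul (Matrix.of ![x, b, w, z]) 0 p x

lemma DD_add1 (a w z x y : Fin 4 → ℚ) : DD a (x + y) w z = DD a x w z + DD a y w z := by
  simpa [upd1, DD] using Matrix.det_updateRow_add (Matrix.of ![a, x, w, z]) 1 x y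

lemma DD_smul1 (a w z x : Fin 4 → ℚ) (p : ℚ) : DD a (p • x) w z = p * DD a x w z := by
  simpa [upd1, DD] using Matrix.det_updateRow_smul (Matrix.of ![a, x, w, z]) 1 p x

lemma DD_add2 (a b z x y : Fin 4 → ℚ) : DD a b (x + y) z = DD a b x z + DD a b y z := by
  simpa [upd2, DD] using Matrix.det_updateRow_add (Matrix.of ![a, b, x, z]) 2 x y

lemma DD_smul2 (a b z x : Fin 4 → ℚ) (p : ℚ) : DD a b (p • x) z = p * DD a b x z := by
  simpa [upd2, DD] using Matrix.det_updateRow_smul (Matrix.of ![a, b, x, z]) 2 p x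

lemma DD_add3 (a b w x y : Fin 4 → ℚ) : DD a b w (x + y) = DD a b w x + DD a b w y := by
  simpa [upd3, DD] using Matrix.det_updateRow_add (Matrix.of ![a, b, w, x]) 3 x y

lemma DD_smul3 (a b w x : Fin 4 → ℚ) (p : ℚ) : DD a b w (p • x) = p * DD a b w x := by
  simpa [upd3, DD] using Matrix.det_updateRow_smul (Matrix.of ![a, b, w, x]) 3 p x

lemma DD_rep01 (u w z : Fin 4 → ℚ) : DD u u w z = 0 :=
  Matrix.det_zero_of_row_eq (show (0 : Fin 4) ≠ 1 by decide) rfl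

lemma DD_rep23 (u v w : Fin 4 → ℚ) : DD u v w w = 0 :=
  Matrix.det_zero_of_row_eq (show (2 : Fin 4) ≠ 3 by decide) rfl

lemma DD_swap01 (u v w z : Fin 4 → ℚ) : DD v u w z = - DD u v w z := by
  have h := DD_rep01 (u + v) w z
  rw [DD_add0, DD_add1, DD_add1, DD_rep01, DD_rep01] at h
  linarith

lemma DD_swap23 (u v w z : Fin 4 → ℚ) : DD u v z w = - DD u v w z := by
  have h := DD_rep23 u v (w + z)
  rw [DD_add2, DD_add3, DD_add3, DD_rep23, DD_rep23] at h
  linarith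

lemma DD_left (u v w z : Fin 4 → ℚ) (p q r s : ℚ) :
    DD (p•u+q•v) (r•u+s•v) w z = (p*s - q*r) * DD u v w z := by
  rw [DD_add0, DD_smul0, DD_smul0, DD_add1, DD_add1, DD_smul1, DD_smul1, DD_smul1, DD_smul1,
    DD_rep01, DD_rep01, DD_swap01]
  ring

lemma DD_right (u v w z : Fin 4 → ℚ) (p q r s : ℚ) :
    DD u v (p•w+q•z) (r•w+s•z) = (p*s - q*r) * DD u v w z := by
  rw [DD_add2, DD_smul2, DD_smul2, DD_add3, DD_add3, DD_smul3, DD_smul3, DD_smul3, DD_smul3,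
    DD_rep23, DD_rep23, DD_swap23]
  ring

lemma DD_cast (A : Matrix (Fin 4) (Fin 8) ℤ) (g : Fin 4 → Fin 8) :
    ((A.submatrix id g).det : ℚ) =
      DD (colQ A (g 0)) (colQ A (g 1)) (colQ A (g 2)) (colQ A (g 3)) := by
  have h1 : ((A.submatrix id g).det : ℚ) = ((A.submatrix id g).map ((↑) : ℤ → ℚ)).det :=
    RingHom.map_det (Int.castRingHom ℚ) _
  rw [h1, DD, ← Matrix.det_transpose]
  congr 1
  ext i j
  fin_cases i <;> simp [colQ, Matrix.transpose_apply]

lemma DD_ne_zero {u v w z : Fin 4 → ℚ}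
    (h : Submodule.span ℚ (Set.range ![u, v, w, z]) = ⊤) : DD u v w z ≠ 0 := by
  have hli : LinearIndependent ℚ ![u, v, w, z] :=
    linearIndependent_of_top_le_span_of_card_eq_finrank (h ▸ le_rfl)
      (by simp [Module.finrank_fintype_fun_eq_card])
  have hunit : IsUnit (Matrix.of ![u, v, w, z]) :=
    Matrix.linearIndependent_rows_iff_isUnit.mp hli
  exact ((Matrix.isUnit_iff_isUnit_det _).mp hunit).ne_zero

/-! ### The integer endgame -/

lemma endgame (d : ℤ) (X Y : Fin 6 → ℤ)
    (hX0 : X 0 = d) (hY0 : Y 0 = d)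
    (hXne : ∀ a, X a ≠ 0) (hYne : ∀ a, Y a ≠ 0)
    (hXb : ∀ a, |X a| ≤ 2) (hYb : ∀ a, |Y a| ≤ 2)
    (px : X 0 * X 5 - X 1 * X 4 + X 2 * X 3 = 0)
    (py : Y 0 * Y 5 - Y 1 * Y 4 + Y 2 * Y 3 = 0)
    (cross : ∀ a b, ∃ m : ℤ, |m| ≤ 2 ∧ X a * Y b = d * m) : False := by
  have hXb' : ∀ a, -2 ≤ X a ∧ X a ≤ 2 := fun a => abs_le.mp (hXb a)
  have hYb' : ∀ a, -2 ≤ Y a ∧ Y a ≤ 2 := fun a => abs_le.mp (hYb a)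
  have hX2 : ∃ a, X a = 2 ∨ X a = -2 := by
    by_contra h
    push_neg at h
    have h1 : ∀ a, X a = 1 ∨ X a = -1 := fun a => by
      have := hXne a; have := hXb' a; have := h a; omega
    rcases h1 0 with h0 | h0 <;> rcases h1 1 with ha | ha <;> rcases h1 2 with hb | hb <;>
      rcases h1 3 with hc | hc <;> rcases h1 4 with he | he <;> rcases h1 5 with hf | hf <;>
      rw [h0, ha, hb, hc, he, hf] at px <;> omega
  have hY2 : ∃ a, Y a = 2 ∨ Y a = -2 := by
    by_contra h
    push_neg at h
    have h1 : ∀ a, Y a = 1 ∨ Y a = -1 := fun a => by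
      have := hYne a; have := hYb' a; have := h a; omega
    rcases h1 0 with h0 | h0 <;> rcases h1 1 with ha | ha <;> rcases h1 2 with hb | hb <;>
      rcases h1 3 with hc | hc <;> rcases h1 4 with he | he <;> rcases h1 5 with hf | hf <;>
      rw [h0, ha, hb, hc, he, hf] at py <;> omega
  obtain ⟨a0, ha0⟩ := hX2
  obtain ⟨b0, hb0⟩ := hY2
  obtain ⟨m, hm, hxy⟩ := cross a0 b0
  have hd2 : d = 2 ∨ d = -2 := by
    have hd0 : d ≠ 0 := hX0 ▸ hXne 0
    have hdb := hX0 ▸ hXb' 0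
    have hmb := abs_le.mp hm
    have hd4 : d = -2 ∨ d = -1 ∨ d = 1 ∨ d = 2 := by omega
    rcases ha0 with h | h <;> rcases hb0 with h' | h' <;> rw [h, h'] at hxy <;>
      rcases hd4 with rfl | rfl | rfl | rfl <;> omega
  have hdvd : ∀ a b, (2 : ℤ) ∣ X a * Y b := by
    intro a b
    obtain ⟨m, _, hxy⟩ := cross a b
    rcases hd2 with h | h <;> rw [h] at hxy
    · exact ⟨m, hxy⟩
    · exact ⟨-m, by rw [hxy]; ring⟩
  by_cases hall : ∀ a, X a = 2 ∨ X a = -2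
  · rcases hall 0 with h0 | h0 <;> rcases hall 1 with ha | ha <;> rcases hall 2 with hb | hb <;>
      rcases hall 3 with hc | hc <;> rcases hall 4 with he | he <;> rcases hall 5 with hf | hf <;>
      rw [h0, ha, hb, hc, he, hf] at px <;> omega
  · push_neg at hall
    obtain ⟨a1, ha1, ha2⟩ := hall
    have hodd : ¬ (2 : ℤ) ∣ X a1 := by
      have := hXne a1; have := hXb' a1; omega
    have hYall : ∀ b, Y b = 2 ∨ Y b = -2 := by
      intro b
      have h2 := hdvd a1 b
      have hb2 : (2 : ℤ) ∣ Y b := ((Int.prime_two.dvd_mul).mp h2).resolve_left hodd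
      have := hYne b; have := hYb' b; omega
    rcases hYall 0 with h0 | h0 <;> rcases hYall 1 with ha | ha <;> rcases hYall 2 with hb | hb <;>
      rcases hYall 3 with hc | hc <;> rcases hYall 4 with he | he <;> rcases hYall 5 with hf | hf <;>
      rw [h0, ha, hb, hc, he, hf] at py <;> omega

/-! ### The glue between determinant identities and the endgame -/

/-- Coefficient vectors of the four columns in terms of the first two. -/
def PF (p2 q2 p3 q3 : ℚ) : Fin 4 → ℚ × ℚ := ![(1, 0), (0, 1), (p2, q2), (p3, q3)]

/-- 2×2 coefficient determinants. -/
def muF (p2 q2 p3 q3 : ℚ) (i j : Fin 4) : ℚ :=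
  (PF p2 q2 p3 q3 i).1 * (PF p2 q2 p3 q3 j).2 - (PF p2 q2 p3 q3 i).2 * (PF p2 q2 p3 q3 j).1

/-- index tables for the six pairs -/
def plF : Fin 6 → Fin 4 := ![0, 0, 0, 1, 1, 2]
def prF : Fin 6 → Fin 4 := ![1, 2, 3, 2, 3, 3]

lemma glue (Mi : Fin 4 → Fin 4 → Fin 4 → Fin 4 → ℤ)
    (dQ : ℚ) (p2 q2 p3 q3 r2 s2 r3 s3 : ℚ)
    (hMb : ∀ i j k l, |Mi i j k l| ≤ 2)
    (hMne : ∀ i j k l : Fin 4, i ≠ j → k ≠ l → Mi i j k l ≠ 0)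
    (hval : ∀ i j k l, ((Mi i j k l : ℤ) : ℚ) =
      muF p2 q2 p3 q3 i j * muF r2 s2 r3 s3 k l * dQ) : False := by
  refine endgame (Mi 0 1 0 1) (fun a => Mi (plF a) (prF a) 0 1)
    (fun b => Mi 0 1 (plF b) (prF b)) rfl rfl ?_ ?_ ?_ ?_ ?_ ?_ ?_
  · intro a; fin_cases a <;> exact hMne _ _ _ _ (by decide) (by decide)
  · intro b; fin_cases b <;> exact hMne _ _ _ _ (by decide) (by decide)
  · intro a; exact hMb _ _ _ _
  · intro b; exact hMb _ _ _ _
  · show Mi 0 1 0 1 * Mi 2 3 0 1 - Mi 0 2 0 1 * Mi 1 3 0 1 + Mi 0 3 0 1 * Mi 1 2 0 1 = 0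
    have h : ((Mi 0 1 0 1 * Mi 2 3 0 1 - Mi 0 2 0 1 * Mi 1 3 0 1
        + Mi 0 3 0 1 * Mi 1 2 0 1 : ℤ) : ℚ) = 0 := by
      push_cast
      rw [hval 0 1 0 1, hval 2 3 0 1, hval 0 2 0 1, hval 1 3 0 1, hval 0 3 0 1, hval 1 2 0 1]
      simp only [muF, PF, Matrix.cons_val_zero, Matrix.cons_val_one, Matrix.head_cons,
        Matrix.cons_val_two, Matrix.tail_cons, Matrix.cons_val_three]
      ring
    exact_mod_cast h
  · show Mi 0 1 0 1 * Mi 0 1 2 3 - Mi 0 1 0 2 * Mi 0 1 1 3 + Mi 0 1 0 3 * Mi 0 1 1 2 = 0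
    have h : ((Mi 0 1 0 1 * Mi 0 1 2 3 - Mi 0 1 0 2 * Mi 0 1 1 3
        + Mi 0 1 0 3 * Mi 0 1 1 2 : ℤ) : ℚ) = 0 := by
      push_cast
      rw [hval 0 1 0 1, hval 0 1 2 3, hval 0 1 0 2, hval 0 1 1 3, hval 0 1 0 3, hval 0 1 1 2]
      simp only [muF, PF, Matrix.cons_val_zero, Matrix.cons_val_one, Matrix.head_cons,
        Matrix.cons_val_two, Matrix.tail_cons, Matrix.cons_val_three]
      ring
    exact_mod_cast h
  · intro a b
    refine ⟨Mi (plF a) (prF a) (plF b) (prF b), hMb _ _ _ _, ?_⟩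
    have h : ((Mi (plF a) (prF a) 0 1 * Mi 0 1 (plF b) (prF b) : ℤ) : ℚ) =
        ((Mi 0 1 0 1 * Mi (plF a) (prF a) (plF b) (prF b) : ℤ) : ℚ) := by
      push_cast
      rw [hval, hval, hval, hval]
      ring
    exact_mod_cast h

/-! ### The main argument -/

/-- The mixed minors of `A`. -/
def MiF (A : Matrix (Fin 4) (Fin 8) ℤ) (g1 g2 : Fin 4 → Fin 8)
    (i j k l : Fin 4) : ℤ := (A.submatrix id ![g1 i, g1 j, g2 k, g2 l]).det

lemma main_aux_s9 (A : Matrix (Fin 4) (Fin 8) ℤ) (c e : Fin 4 → Fin 4 → ℚ)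
    (g1 g2 : Fin 4 → Fin 8)
    (hc : ∀ j, c j = colQ A (g1 j)) (he : ∀ j, e j = colQ A (g2 j))
    (hrank : (A.map ((↑) : ℤ → ℚ)).rank = 4)
    (hminor : ∀ (f : Fin 4 → Fin 4) (g : Fin 4 → Fin 8), |(A.submatrix f g).det| ≤ 2)
    (hfr1 : Module.finrank ℚ (Submodule.span ℚ (Set.range c)) = 2)
    (hind1 : ∀ i j : Fin 4, i ≠ j → LinearIndependent ℚ ![c i, c j])
    (hfr2 : Module.finrank ℚ (Submodule.span ℚ (Set.range e)) = 2)
    (hind2 : ∀ i j : Fin 4, i ≠ j → LinearIndependent ℚ ![e i, e j])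
    (hcols : ∀ m : Fin 8, (∃ j, g1 j = m) ∨ (∃ j, g2 j = m)) : False := by
  set W1 := Submodule.span ℚ (Set.range c) with hW1
  set W2 := Submodule.span ℚ (Set.range e) with hW2
  have h4 : Module.finrank ℚ (Fin 4 → ℚ) = 4 := by
    simp [Module.finrank_fintype_fun_eq_card]
  have htop : Submodule.span ℚ (Set.range (Matrix.transpose (A.map ((↑) : ℤ → ℚ)))) = ⊤ :=
    Submodule.eq_top_of_finrank_eq
      (by have h := Matrix.rank_eq_finrank_span_cols (A.map ((↑) : ℤ → ℚ)); rw [hrank] at h; rw [h4]; exact h.symm)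
  have hcolmem : ∀ m : Fin 8, colQ A m ∈ W1 ⊔ W2 := by
    intro m
    rcases hcols m with ⟨j, rfl⟩ | ⟨j, rfl⟩
    · exact Submodule.mem_sup_left (hc j ▸ Submodule.subset_span ⟨j, (hc j).symm ▸ rfl⟩)
    · exact Submodule.mem_sup_right (he j ▸ Submodule.subset_span ⟨j, (he j).symm ▸ rfl⟩)
  have htop2 : W1 ⊔ W2 = ⊤ := by
    rw [eq_top_iff, ← htop]
    rw [Submodule.span_le]
    rintro x ⟨m, rfl⟩
    exact hcolmem m
  have hrange2 : ∀ u v : Fin 4 → ℚ, Set.range ![u, v] = {u, v} := by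
    intro u v; ext x; simp [Fin.exists_fin_two]; tauto
  have hspan1 : ∀ i j : Fin 4, i ≠ j → Submodule.span ℚ {c i, c j} = W1 := by
    intro i j hij
    refine Submodule.eq_of_le_of_finrank_le
      (Submodule.span_le.mpr (Set.pair_subset (Submodule.subset_span ⟨i, rfl⟩)
        (Submodule.subset_span ⟨j, rfl⟩))) ?_
    rw [hfr1]
    have h2 := finrank_span_eq_card (hind1 i j hij)
    rw [hrange2] at h2
    rw [h2]
    simp
  have hspan2 : ∀ i j : Fin 4, i ≠ j → Submodule.span ℚ {e i, e j} = W2 := by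
    intro i j hij
    refine Submodule.eq_of_le_of_finrank_le
      (Submodule.span_le.mpr (Set.pair_subset (Submodule.subset_span ⟨i, rfl⟩)
        (Submodule.subset_span ⟨j, rfl⟩))) ?_
    rw [hfr2]
    have h2 := finrank_span_eq_card (hind2 i j hij)
    rw [hrange2] at h2
    rw [h2]
    simp
  have hbase : ∀ i j k l : Fin 4, i ≠ j → k ≠ l → DD (c i) (c j) (e k) (e l) ≠ 0 := by
    intro i j k l hij hkl
    apply DD_ne_zero
    rw [eq_top_iff, ← htop2]
    refine sup_le ?_ ?_
    · rw [← hspan1 i j hij]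
      exact Submodule.span_mono (Set.pair_subset ⟨0, rfl⟩ ⟨1, rfl⟩)
    · rw [← hspan2 k l hkl]
      exact Submodule.span_mono (Set.pair_subset ⟨2, rfl⟩ ⟨3, rfl⟩)
  -- cast of minors
  have hcast : ∀ i j k l : Fin 4, ((MiF A g1 g2 i j k l : ℤ) : ℚ) =
      DD (c i) (c j) (e k) (e l) := by
    intro i j k l
    have h := DD_cast A ![g1 i, g1 j, g2 k, g2 l]
    simp only [Matrix.cons_val_zero, Matrix.cons_val_one, Matrix.head_cons,
      Matrix.cons_val_two, Matrix.tail_cons, Matrix.cons_val_three] at h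
    rw [MiF, h, hc i, hc j, he k, he l]
  -- coordinates
  have hm2 : c 2 ∈ Submodule.span ℚ ({c 0, c 1} : Set (Fin 4 → ℚ)) := by
    rw [hspan1 0 1 (by decide)]; exact Submodule.subset_span ⟨2, rfl⟩
  have hm3 : c 3 ∈ Submodule.span ℚ ({c 0, c 1} : Set (Fin 4 → ℚ)) := by
    rw [hspan1 0 1 (by decide)]; exact Submodule.subset_span ⟨3, rfl⟩
  have hn2 : e 2 ∈ Submodule.span ℚ ({e 0, e 1} : Set (Fin 4 → ℚ)) := by
    rw [hspan2 0 1 (by decide)]; exact Submodule.subset_span ⟨2, rfl⟩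
  have hn3 : e 3 ∈ Submodule.span ℚ ({e 0, e 1} : Set (Fin 4 → ℚ)) := by
    rw [hspan2 0 1 (by decide)]; exact Submodule.subset_span ⟨3, rfl⟩
  obtain ⟨p2, q2, hp2⟩ := Submodule.mem_span_pair.mp hm2
  obtain ⟨p3, q3, hp3⟩ := Submodule.mem_span_pair.mp hm3
  obtain ⟨r2, s2, hr2⟩ := Submodule.mem_span_pair.mp hn2
  obtain ⟨r3, s3, hr3⟩ := Submodule.mem_span_pair.mp hn3
  have hcP : ∀ i : Fin 4, c i = (PF p2 q2 p3 q3 i).1 • c 0 + (PF p2 q2 p3 q3 i).2 • c 1 := by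
    intro i
    fin_cases i
    · show c 0 = (1 : ℚ) • c 0 + (0 : ℚ) • c 1; simp
    · show c 1 = (0 : ℚ) • c 0 + (1 : ℚ) • c 1; simp
    · show c 2 = p2 • c 0 + q2 • c 1; exact hp2.symm
    · show c 3 = p3 • c 0 + q3 • c 1; exact hp3.symm
  have heQ : ∀ k : Fin 4, e k = (PF r2 s2 r3 s3 k).1 • e 0 + (PF r2 s2 r3 s3 k).2 • e 1 := by
    intro k
    fin_cases k
    · show e 0 = (1 : ℚ) • e 0 + (0 : ℚ) • e 1; simp
    · show e 1 = (0 : ℚ) • e 0 + (1 : ℚ) • e 1; simp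
    · show e 2 = r2 • e 0 + s2 • e 1; exact hr2.symm
    · show e 3 = r3 • e 0 + s3 • e 1; exact hr3.symm
  have hval : ∀ i j k l : Fin 4, ((MiF A g1 g2 i j k l : ℤ) : ℚ) =
      muF p2 q2 p3 q3 i j * muF r2 s2 r3 s3 k l * DD (c 0) (c 1) (e 0) (e 1) := by
    intro i j k l
    rw [hcast i j k l]
    conv_lhs => rw [hcP i, hcP j, DD_left, heQ k, heQ l, DD_right]
    simp only [muF]
    ring
  refine glue (MiF A g1 g2) (DD (c 0) (c 1) (e 0) (e 1)) p2 q2 p3 q3 r2 s2 r3 s3 ?_ ?_ hval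
  · intro i j k l; exact hminor id _
  · intro i j k l hij hkl h0
    apply hbase i j k l hij hkl
    rw [← hcast, h0, Int.cast_zero]

/-- The matroid `U_{2,4} ⊕ U_{2,4}` has no `2`-modular representation over `ℝ`:
there is no rank-`4` `2`-modular `4 × 8` integer matrix whose first four columns span
a `2`-dimensional space and are pairwise non-parallel, and likewise for the last four
columns. -/
theorem statement9 :
    ¬ ∃ A : Matrix (Fin 4) (Fin 8) ℤ,
      (A.map ((↑) : ℤ → ℚ)).rank = 4 ∧
      (∀ (f : Fin 4 → Fin 4) (g : Fin 4 → Fin 8), |(A.submatrix f g).det| ≤ 2) ∧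
      Module.finrank ℚ
        (Submodule.span ℚ (Set.range fun j : Fin 4 => colQ A ⟨j.1, by omega⟩)) = 2 ∧
      (∀ j j' : Fin 4, j ≠ j' →
        LinearIndependent ℚ ![colQ A ⟨j.1, by omega⟩, colQ A ⟨j'.1, by omega⟩]) ∧
      Module.finrank ℚ
        (Submodule.span ℚ (Set.range fun j : Fin 4 => colQ A ⟨j.1 + 4, by omega⟩)) = 2 ∧
      (∀ j j' : Fin 4, j ≠ j' →
        LinearIndependent ℚ ![colQ A ⟨j.1 + 4, by omega⟩, colQ A ⟨j'.1 + 4, by omega⟩]) := by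
  rintro ⟨A, hrank, hminor, hfr1, hind1, hfr2, hind2⟩
  refine main_aux_s9 A (fun j => colQ A ⟨j.1, by omega⟩) (fun j => colQ A ⟨j.1 + 4, by omega⟩)
    (fun j => ⟨j.1, by omega⟩) (fun j => ⟨j.1 + 4, by omega⟩)
    (fun j => rfl) (fun j => rfl) hrank hminor hfr1 hind1 hfr2 hind2 ?_
  intro m
  rcases m with ⟨v, hv⟩
  by_cases h : v < 4
  · exact Or.inl ⟨⟨v, h⟩, rfl⟩
  · refine Or.inr ⟨⟨v - 4, by omega⟩, ?_⟩
    apply Fin.ext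
    simp
    omega
end

section
/- There exists a 3 × 7 integer matrix A with the following properties: A has rank 3 over ℚ; every 3 × 3 submatrix of A has determinant of absolute value at most 2; columns 1, 2, 3 of A are nonzero and pairwise linearly dependent over ℚ (pairwise parallel); and columns 4, 5, 6, 7 of A span a 2-dimensional ℚ-subspace with every two of them linearly independent. (Equivalently, the matroid U_{1,3} ⊕ U_{2,4} has a 2-modular representation over ℝ.) -/
private def M : Matrix (Fin 3) (Fin 7) ℤ :=
  !![1,1,1,0,0,0,0; 0,0,0,1,0,1,1; 0,0,0,0,1,1,-1]

set_option maxHeartbeats 1000000 in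
private lemma key : ∀ a b c : Fin 7,
    |M 0 a * M 1 b * M 2 c - M 0 a * M 1 c * M 2 b - M 0 b * M 1 a * M 2 c
      + M 0 b * M 1 c * M 2 a + M 0 c * M 1 a * M 2 b - M 0 c * M 1 b * M 2 a| ≤ 2 := by decide

private lemma det_bound (f : Fin 3 → Fin 3) (g : Fin 3 → Fin 7) :
    |(M.submatrix f g).det| ≤ 2 := by
  by_cases hf : Function.Injective f
  · have hb : Function.Bijective f := ⟨hf, Finite.surjective_of_injective hf⟩
    have h1 : M.submatrix f g
        = ((M.submatrix id g).submatrix (Equiv.ofBijective f hb) (Equiv.refl (Fin 3))) := by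
      simp [Matrix.submatrix_submatrix]
    rw [h1, Matrix.abs_det_submatrix_equiv_equiv, Matrix.det_fin_three]
    simpa [Matrix.submatrix_apply] using key (g 0) (g 1) (g 2)
  · simp only [Function.Injective, not_forall] at hf
    obtain ⟨i, j, hij, hne⟩ := hf
    have : (M.submatrix f g).det = 0 :=
      Matrix.det_zero_of_row_eq hne (funext fun k => by simp [Matrix.submatrix_apply, hij])
    simp [this]

private lemma li_of_cross (u v : Fin 3 → ℚ) (h : u 1 * v 2 - u 2 * v 1 ≠ 0) :
    LinearIndependent ℚ ![u, v] := by
  rw [linearIndependent_fin2]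
  refine ⟨?_, ?_⟩
  · intro hv
    simp only [Matrix.cons_val_one, Matrix.head_cons, Matrix.cons_val_zero] at hv
    apply h; rw [hv]; simp
  · intro a ha
    simp only [Matrix.cons_val_one, Matrix.head_cons, Matrix.cons_val_zero] at ha
    apply h
    rw [← ha]
    simp only [Pi.smul_apply, smul_eq_mul]; ring

private lemma c0 (h : (0:ℕ) < 7) : colQ M ⟨0, h⟩ = ![1,0,0] := by
  funext i; fin_cases i <;> simp only [colQ, M] <;> norm_cast
private lemma c1 (h : (1:ℕ) < 7) : colQ M ⟨1, h⟩ = ![1,0,0] := by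
  funext i; fin_cases i <;> simp only [colQ, M] <;> norm_cast
private lemma c2 (h : (2:ℕ) < 7) : colQ M ⟨2, h⟩ = ![1,0,0] := by
  funext i; fin_cases i <;> simp only [colQ, M] <;> norm_cast
private lemma c3 (h : (3:ℕ) < 7) : colQ M ⟨3, h⟩ = ![0,1,0] := by
  funext i; fin_cases i <;> simp only [colQ, M] <;> norm_cast
private lemma c4 (h : (4:ℕ) < 7) : colQ M ⟨4, h⟩ = ![0,0,1] := by
  funext i; fin_cases i <;> simp only [colQ, M] <;> norm_cast
private lemma c5 (h : (5:ℕ) < 7) : colQ M ⟨5, h⟩ = ![0,1,1] := by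
  funext i; fin_cases i <;> simp only [colQ, M] <;> norm_cast
private lemma c6 (h : (6:ℕ) < 7) : colQ M ⟨6, h⟩ = ![0,1,-1] := by
  funext i; fin_cases i <;> simp only [colQ, M] <;> norm_cast

private lemma cfirst (k : ℕ) (hk : k < 3) (h : k < 7) : colQ M ⟨k, h⟩ = ![1,0,0] := by
  interval_cases k
  exacts [c0 h, c1 h, c2 h]

private lemma li_pair (p q : Fin 7) (hpq : M 1 p * M 2 q - M 2 p * M 1 q ≠ 0) :
    LinearIndependent ℚ ![colQ M p, colQ M q] := by
  refine li_of_cross _ _ ?_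
  simp only [colQ]
  intro h
  apply hpq
  exact_mod_cast h

/-- The matroid `U_{1,3} ⊕ U_{2,4}` has a `2`-modular representation over `ℝ`:
there is a rank-`3` `2`-modular `3 × 7` integer matrix whose first three columns are
nonzero and pairwise parallel, and whose last four columns span a `2`-dimensional
space and are pairwise non-parallel. -/
theorem statement10 :
    ∃ A : Matrix (Fin 3) (Fin 7) ℤ,
      (A.map ((↑) : ℤ → ℚ)).rank = 3 ∧
      (∀ (f : Fin 3 → Fin 3) (g : Fin 3 → Fin 7), |(A.submatrix f g).det| ≤ 2) ∧
      (∀ j : Fin 3, colQ A ⟨j.1, by omega⟩ ≠ 0) ∧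
      (∀ j j' : Fin 3, j ≠ j' →
        ¬ LinearIndependent ℚ ![colQ A ⟨j.1, by omega⟩, colQ A ⟨j'.1, by omega⟩]) ∧
      Module.finrank ℚ
        (Submodule.span ℚ (Set.range fun j : Fin 4 => colQ A ⟨j.1 + 3, by omega⟩)) = 2 ∧
      (∀ j j' : Fin 4, j ≠ j' →
        LinearIndependent ℚ ![colQ A ⟨j.1 + 3, by omega⟩, colQ A ⟨j'.1 + 3, by omega⟩]) := by
  refine ⟨M, ?_, det_bound, ?_, ?_, ?_, ?_⟩
  · -- rank
    rw [Matrix.rank_eq_finrank_span_cols]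
    have htop : Submodule.span ℚ (Set.range (M.map ((↑) : ℤ → ℚ)).transpose) = ⊤ := by
      rw [eq_top_iff]
      intro x _
      have hx : x = x 0 • colQ M ⟨0, by omega⟩ + x 1 • colQ M ⟨3, by omega⟩
          + x 2 • colQ M ⟨4, by omega⟩ := by
        rw [c0, c3, c4]
        funext i; fin_cases i <;> simp
      have hmem : ∀ (j : Fin 7), colQ M j ∈
          Submodule.span ℚ (Set.range (M.map ((↑) : ℤ → ℚ)).transpose) := by
        intro j
        exact Submodule.subset_span ⟨j, rfl⟩
      rw [hx]
      exact Submodule.add_mem _ (Submodule.add_mem _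
        (Submodule.smul_mem _ _ (hmem _)) (Submodule.smul_mem _ _ (hmem _)))
        (Submodule.smul_mem _ _ (hmem _))
    rw [show Set.range (M.map ((↑) : ℤ → ℚ)).col = Set.range (M.map ((↑) : ℤ → ℚ)).transpose from rfl, htop, finrank_top]
    simp [Module.finrank_pi]
  · -- nonzero columns
    intro j h
    have h0 := congrFun ((cfirst j.1 j.2 (by omega)).symm.trans h) 0
    norm_num at h0
  · -- pairwise parallel
    intro j j' hne hli
    have heq : colQ M ⟨j.1, by omega⟩ = colQ M ⟨j'.1, by omega⟩ :=
      (cfirst j.1 j.2 (by omega)).trans (cfirst j'.1 j'.2 (by omega)).symm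
    rw [heq] at hli
    have := hli.injective (a₁ := 0) (a₂ := 1) (by simp)
    exact absurd this (by decide)
  · -- span finrank
    have hspan : (Submodule.span ℚ
        (Set.range fun j : Fin 4 => colQ M ⟨j.1 + 3, by omega⟩))
        = Submodule.span ℚ (Set.range ![(![0,1,0] : Fin 3 → ℚ), ![0,0,1]]) := by
      apply le_antisymm <;> rw [Submodule.span_le] <;> rintro x ⟨j, rfl⟩
      · fin_cases j
        · show colQ M ⟨3, by omega⟩ ∈ _
          rw [c3]
          exact Submodule.subset_span ⟨0, rfl⟩
        · show colQ M ⟨4, by omega⟩ ∈ _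
          rw [c4]
          exact Submodule.subset_span ⟨1, rfl⟩
        · show colQ M ⟨5, by omega⟩ ∈ _
          rw [c5]
          have h56 : (![0,1,1] : Fin 3 → ℚ) = ![0,1,0] + ![0,0,1] := by
            funext i; fin_cases i <;> simp
          rw [h56]
          exact Submodule.add_mem _ (Submodule.subset_span ⟨0, rfl⟩)
            (Submodule.subset_span ⟨1, rfl⟩)
        · show colQ M ⟨6, by omega⟩ ∈ _
          rw [c6]
          have h67 : (![0,1,-1] : Fin 3 → ℚ) = ![0,1,0] - ![0,0,1] := by
            funext i; fin_cases i <;> simp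
          rw [h67]
          exact Submodule.sub_mem _ (Submodule.subset_span ⟨0, rfl⟩)
            (Submodule.subset_span ⟨1, rfl⟩)
      · fin_cases j
        · exact Submodule.subset_span ⟨0, c3 (by omega)⟩
        · exact Submodule.subset_span ⟨1, c4 (by omega)⟩
    rw [hspan]
    have hli : LinearIndependent ℚ ![(![0,1,0] : Fin 3 → ℚ), ![0,0,1]] :=
      li_of_cross _ _ (by norm_num; exact one_ne_zero)
    rw [finrank_span_eq_card hli]
    simp
  · -- pairwise non-parallel
    intro j j' hne
    apply li_pair
    fin_cases j <;> fin_cases j' <;> first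
      | exact absurd rfl hne
      | decide
end

section
/- Let B be the 2 × 3 integer matrix with rows (1, 1, 1) and (0, 2, 3). Then: (i) every 2 × 2 submatrix of B has determinant of absolute value at most 3 (so B is 3-modular); and (ii) there do not exist an invertible 2 × 2 matrix U over ℚ and a column index j ∈ {2, 3} such that U·B (computed over ℚ) has all integer entries and the two columns of U·B indexed by 1 and j are, in some order, the two standard basis vectors e_1 and e_2 of ℚ². (That is, B is not row-equivalent to an integer matrix with an I_2-submatrix that uses the first column.) -/
/-- The `2 × 3` integer matrix with rows `(1, 1, 1)` and `(0, 2, 3)`. -/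
def Bmat : Matrix (Fin 2) (Fin 3) ℤ := !![1, 1, 1; 0, 2, 3]

/-- `Bmat`, viewed over `ℚ`. -/
def BmatQ : Matrix (Fin 2) (Fin 3) ℚ := Bmat.map ((↑) : ℤ → ℚ)

/-- The matrix `B` with rows `(1,1,1)` and `(0,2,3)` is `3`-modular, but no invertible
row transformation over `ℚ` turns `B` into an integer matrix having an `I_2`-submatrix
that uses the first column. -/
theorem statement11 :
    (∀ (f : Fin 2 → Fin 2) (g : Fin 2 → Fin 3), |(Bmat.submatrix f g).det| ≤ 3) ∧
    ¬ ∃ (U : Matrix (Fin 2) (Fin 2) ℚ) (j : Fin 3), IsUnit U ∧ j ≠ 0 ∧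
        (∀ (i : Fin 2) (k : Fin 3), ∃ z : ℤ, (U * BmatQ) i k = (z : ℚ)) ∧
        (((fun i => (U * BmatQ) i 0) = ![1, 0] ∧ (fun i => (U * BmatQ) i j) = ![0, 1]) ∨
         ((fun i => (U * BmatQ) i 0) = ![0, 1] ∧ (fun i => (U * BmatQ) i j) = ![1, 0])) := by
  constructor
  · intro f g
    fin_cases f <;> fin_cases g <;>
      simp [Bmat, Matrix.det_fin_two, Matrix.submatrix_apply] <;> decide
  · rintro ⟨U, j, -, hj, hint, hcols⟩
    have e0 : ∀ i, (U * BmatQ) i 0 = U i 0 := by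
      intro i; simp [Matrix.mul_apply, Fin.sum_univ_succ, BmatQ, Bmat]
    have e1 : ∀ i, (U * BmatQ) i 1 = U i 0 + 2 * U i 1 := by
      intro i; simp [Matrix.mul_apply, Fin.sum_univ_succ, BmatQ, Bmat]; ring
    have e2 : ∀ i, (U * BmatQ) i 2 = U i 0 + 3 * U i 1 := by
      intro i; simp [Matrix.mul_apply, Fin.sum_univ_succ, BmatQ, Bmat]; ring
    fin_cases j
    · exact hj rfl
    · rcases hcols with ⟨h0, h1⟩ | ⟨h0, h1⟩
      · have a0 : U 0 0 = 1 := by have := congrFun h0 0; rw [e0] at this; simpa using this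
        have b0 : U 0 0 + 2 * U 0 1 = 0 := by
          rw [← e1 0]; simpa using congrFun h1 0
        obtain ⟨z, hz⟩ := hint 0 2
        rw [e2] at hz
        have hc : (2 * z : ℚ) = -1 := by linarith
        have : (2 * z : ℤ) = -1 := by exact_mod_cast hc
        omega
      · have a0 : U 0 0 = 0 := by have := congrFun h0 0; rw [e0] at this; simpa using this
        have b0 : U 0 0 + 2 * U 0 1 = 1 := by
          rw [← e1 0]; simpa using congrFun h1 0
        obtain ⟨z, hz⟩ := hint 0 2
        rw [e2] at hz
        have hc : (2 * z : ℚ) = 3 := by linarith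
        have : (2 * z : ℤ) = 3 := by exact_mod_cast hc
        omega
    · rcases hcols with ⟨h0, h1⟩ | ⟨h0, h1⟩
      · have a0 : U 0 0 = 1 := by have := congrFun h0 0; rw [e0] at this; simpa using this
        have b0 : U 0 0 + 3 * U 0 1 = 0 := by
          rw [← e2 0]; simpa using congrFun h1 0
        obtain ⟨z, hz⟩ := hint 0 1
        rw [e1] at hz
        have hc : (3 * z : ℚ) = 1 := by linarith
        have : (3 * z : ℤ) = 1 := by exact_mod_cast hc
        omega
      · have a0 : U 0 0 = 0 := by have := congrFun h0 0; rw [e0] at this; simpa using this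
        have b0 : U 0 0 + 3 * U 0 1 = 1 := by
          rw [← e2 0]; simpa using congrFun h1 0
        obtain ⟨z, hz⟩ := hint 0 1
        rw [e1] at hz
        have hc : (3 * z : ℚ) = 2 := by linarith
        have : (3 * z : ℤ) = 2 := by exact_mod_cast hc
        omega
end

section
/- Let M be a simple matroid of rank 3 whose ground set E has exactly 9 elements, and suppose there exist an element x ∈ E and three distinct long lines L₁, L₂, L₃ of M, each containing x, with E = L₁ ∪ L₂ ∪ L₃. Then either M has a minor isomorphic to the uniform matroid U_{2,5}, or else (after suitably reindexing the three lines) |L₁| = |L₂| = 4 and |L₃| = 3, and each of the two elements of L₃ \ {x} lies on at least four long lines of M (so that M is isomorphic to the ternary Reid geometry R₉). -/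
variable {α : Type*}

/-- A matroid is simple if every subset of the ground set with at most two elements
is independent (equivalently, it has no loops and no parallel pairs). -/
def Matroid.IsSimpleMatroid (M : Matroid α) : Prop :=
  ∀ e ∈ M.E, ∀ f ∈ M.E, M.Indep {e, f}

/-- A line of a matroid: a flat of rank two. -/
def Matroid.IsLine (M : Matroid α) (L : Set α) : Prop :=
  M.IsFlat L ∧ ∃ I, M.IsBasis I L ∧ I.encard = 2

/-- A long line: a line with at least three elements. -/
def Matroid.IsLongLine (M : Matroid α) (L : Set α) : Prop :=
  M.IsLine L ∧ 3 ≤ L.encard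

/-- `M` has a minor isomorphic to `U_{2,5}`: there are disjoint sets `C, X ⊆ M.E`
with `C` independent and `|X| = 5` such that, in the minor of `M` obtained by
contracting `C` and restricting to `X`, a subset of `X` is independent exactly
when it has at most two elements. -/
def Matroid.HasU25Minor (M : Matroid α) : Prop :=
  ∃ C X : Set α, C ⊆ M.E ∧ X ⊆ M.E ∧ Disjoint C X ∧ M.Indep C ∧ X.encard = 5 ∧
    ∀ Y ⊆ X, (M.Indep (Y ∪ C) ↔ Y.encard ≤ 2)

open Set

namespace MyAux

variable {α : Type*} {M : Matroid α} {L L' X Y : Set α} {a b e f u v x y : α}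

lemma closure_flat (M : Matroid α) (X : Set α) : M.IsFlat (M.closure X) := by
  rw [Matroid.closure_def, sInter_eq_iInter]
  haveI : Nonempty {F // F ∈ {F | M.IsFlat F ∧ X ∩ M.E ⊆ F}} :=
    ⟨⟨M.E, M.ground_isFlat, inter_subset_right⟩⟩
  exact Matroid.IsFlat.iInter fun F => F.2.1

lemma pair_indep (hs : M.IsSimpleMatroid) (he : e ∈ M.E) (hf : f ∈ M.E) :
    M.Indep {e, f} := hs e he f hf

lemma singleton_indep (hs : M.IsSimpleMatroid) (he : e ∈ M.E) : M.Indep {e} := by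
  simpa using hs e he e he

/-- An independent pair spans a line. -/
lemma pair_closure_isLine (hab : M.Indep {a, b}) (hne : a ≠ b) :
    M.IsLine (M.closure {a, b}) :=
  ⟨closure_flat M _, {a, b}, hab.isBasis_closure, encard_pair hne⟩

/-- A line equals the closure of any independent pair inside it. -/
lemma line_eq_closure_pair (hL : M.IsLine L) (hab : M.Indep {a, b}) (hne : a ≠ b)
    (ha : a ∈ L) (hb : b ∈ L) : L = M.closure {a, b} := by
  obtain ⟨hF, I, hI, hIcard⟩ := hL
  obtain ⟨J, hJ, hsub⟩ := hab.subset_isBasis_of_subset (pair_subset ha hb) hF.subset_ground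
  have hJ2 : J.encard = 2 := (hJ.encard_eq_encard hI).trans hIcard
  have hJfin : J.Finite := finite_of_encard_eq_coe (k := 2) (by exact_mod_cast hJ2)
  have hEq : {a, b} = J :=
    hJfin.eq_of_subset_of_encard_le' hsub (hJ2.trans (encard_pair hne).symm).le
  refine subset_antisymm ?_ ?_
  · exact (hJ.subset_closure).trans (by rw [hEq])
  · rw [← hF.closure]
    exact M.closure_subset_closure (pair_subset ha hb)

/-- Two lines through two common distinct points coincide. -/
lemma line_unique (hL : M.IsLine L) (hL' : M.IsLine L') (hab : M.Indep {a, b}) (hne : a ≠ b)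
    (ha : a ∈ L) (hb : b ∈ L) (ha' : a ∈ L') (hb' : b ∈ L') : L = L' := by
  rw [line_eq_closure_pair hL hab hne ha hb, line_eq_closure_pair hL' hab hne ha' hb']

/-- Two distinct lines meet in at most one point. -/
lemma lines_inter_subsingleton (hs : M.IsSimpleMatroid) (hL : M.IsLine L) (hL' : M.IsLine L')
    (hne : L ≠ L') : (L ∩ L').Subsingleton := by
  intro a ha b hb
  by_contra hab
  exact hne (line_unique hL hL' (pair_indep hs (hL.1.subset_ground ha.1)
    (hL.1.subset_ground hb.1)) hab ha.1 hb.1 ha.2 hb.2)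

lemma indep_encard_le_two_of_subset_line (hL : M.IsLine L) (hY : M.Indep Y) (hYL : Y ⊆ L) :
    Y.encard ≤ 2 := by
  obtain ⟨hF, I, hI, hIcard⟩ := hL
  obtain ⟨J, hJ, hsub⟩ := hY.subset_isBasis_of_subset hYL hF.subset_ground
  calc Y.encard ≤ J.encard := encard_le_encard hsub
    _ = 2 := (hJ.encard_eq_encard hI).trans hIcard

lemma indep_encard_le_three (hrk : ∃ B, M.IsBase B ∧ B.encard = 3) (hY : M.Indep Y) :
    Y.encard ≤ 3 := by
  obtain ⟨B, hB, hB3⟩ := hrk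
  obtain ⟨B', hB', hsub⟩ := hY.exists_isBase_superset
  calc Y.encard ≤ B'.encard := encard_le_encard hsub
    _ = 3 := (hB'.encard_eq_encard_of_isBase hB).trans hB3

lemma eq_cases_of_encard_le_two {Y : Set α} (h2 : Y.encard ≤ 2) :
    Y = ∅ ∨ (∃ e, Y = {e}) ∨ ∃ e f, e ≠ f ∧ Y = {e, f} := by
  have hfin : Y.Finite := by
    rw [← encard_ne_top_iff]
    intro h
    rw [h] at h2
    exact absurd h2 (by simp)
  obtain ⟨k, hk⟩ := hfin.exists_encard_eq_coe
  rw [hk] at h2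
  have hk2 : k ≤ 2 := by exact_mod_cast h2
  interval_cases k
  · exact Or.inl (by rw [show ((0:ℕ):ℕ∞) = 0 by norm_cast, encard_eq_zero] at hk; exact hk)
  · exact Or.inr (Or.inl (by rw [show ((1:ℕ):ℕ∞) = 1 by norm_cast, encard_eq_one] at hk; exact hk))
  · refine Or.inr (Or.inr ?_)
    obtain ⟨e, f, hef, rfl⟩ := encard_eq_two.mp (by exact_mod_cast hk)
    exact ⟨e, f, hef, rfl⟩

lemma indep_of_encard_le_two (hs : M.IsSimpleMatroid) (hY : Y ⊆ M.E) (h2 : Y.encard ≤ 2) :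
    M.Indep Y := by
  obtain h0 | ⟨e, rfl⟩ | ⟨e, f, hef, rfl⟩ := eq_cases_of_encard_le_two h2
  · exact h0 ▸ M.empty_indep
  · exact singleton_indep hs (hY rfl)
  · exact pair_indep hs (hY (by simp)) (hY (by simp))


lemma u25_of_line_five (hs : M.IsSimpleMatroid) (hL : M.IsLine L) (h5 : 5 ≤ L.encard) :
    M.HasU25Minor := by
  obtain ⟨X, hXL, hX5⟩ := exists_subset_encard_eq h5
  refine ⟨∅, X, empty_subset _, hXL.trans hL.1.subset_ground, empty_disjoint _, M.empty_indep,
    hX5, fun Y hYX => ?_⟩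
  rw [union_empty]
  constructor
  · exact fun hY => indep_encard_le_two_of_subset_line hL hY (hYX.trans hXL)
  · exact fun h2 => indep_of_encard_le_two hs
      (hYX.trans (hXL.trans hL.1.subset_ground)) h2


lemma u25_of_five_points (hs : M.IsSimpleMatroid) (hrk : ∃ B, M.IsBase B ∧ B.encard = 3)
    (hy : y ∈ M.E) (hXE : X ⊆ M.E) (hyX : y ∉ X) (hX5 : X.encard = 5)
    (hP : ∀ u ∈ X, ∀ v ∈ X, u ≠ v → v ∉ M.closure {y, u}) : M.HasU25Minor := by
  refine ⟨{y}, X, singleton_subset_iff.mpr hy, hXE, by simpa using hyX,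
    singleton_indep hs hy, hX5, fun Y hYX => ?_⟩
  constructor
  · intro hind
    have hyY : y ∉ Y := fun h => hyX (hYX h)
    have hcard : (Y ∪ {y}).encard = Y.encard + 1 := by
      rw [union_singleton, encard_insert_of_notMem hyY]
    have h3 : Y.encard + 1 ≤ 3 := hcard ▸ indep_encard_le_three hrk hind
    have : Y.encard + 1 ≤ 2 + 1 := h3
    exact (ENat.add_le_add_iff_right (by simp)).mp this
  · intro h2
    obtain h0 | ⟨u, rfl⟩ | ⟨u, v, hne, rfl⟩ := eq_cases_of_encard_le_two h2
    · rw [h0, empty_union]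
      exact singleton_indep hs hy
    · rw [union_singleton]
      exact pair_indep hs hy (hXE (hYX rfl))
    · have hu : u ∈ X := hYX (by simp)
      have hv : v ∈ X := hYX (by simp)
      have hbase : M.Indep {y, u} := pair_indep hs hy (hXE hu)
      have hvm : v ∉ ({y, u} : Set α) := by
        simp only [mem_insert_iff, mem_singleton_iff]
        push_neg
        exact ⟨fun h => hyX (h ▸ hv), hne.symm⟩
      have hins : M.Indep (insert v {y, u}) :=
        (hbase.insert_indep_iff_of_notMem hvm).mpr ⟨hXE hv, hP u hu v hv hne⟩
      have heq : ({u, v} : Set α) ∪ {y} = insert v {y, u} := by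
        ext w; simp only [union_singleton, mem_insert_iff, mem_singleton_iff]; tauto
      rw [heq]
      exact hins


lemma mem_closure_pair_left (M : Matroid α) (hyE : y ∈ M.E) (huE : u ∈ M.E) :
    y ∈ M.closure {y, u} :=
  M.subset_closure _ (pair_subset hyE huE) (by simp)

lemma mem_closure_pair_right (M : Matroid α) (hyE : y ∈ M.E) (huE : u ∈ M.E) :
    u ∈ M.closure {y, u} :=
  M.subset_closure _ (pair_subset hyE huE) (by simp)

lemma mem_closure_pair_symm (hs : M.IsSimpleMatroid) (hyE : y ∈ M.E) (huE : u ∈ M.E)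
    (hyu : y ≠ u) (hyv : y ≠ v) (hv : v ∈ M.closure {y, u}) : u ∈ M.closure {y, v} := by
  have hvE : v ∈ M.E := M.closure_subset_ground _ hv
  have h1 : M.IsLine (M.closure {y, u}) := pair_closure_isLine (pair_indep hs hyE huE) hyu
  have h2 : M.IsLine (M.closure {y, v}) := pair_closure_isLine (pair_indep hs hyE hvE) hyv
  have heq : M.closure {y, u} = M.closure {y, v} :=
    line_unique h1 h2 (pair_indep hs hyE hvE) hyv (mem_closure_pair_left M hyE huE) hv
      (mem_closure_pair_left M hyE hvE) (mem_closure_pair_right M hyE hvE)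
  exact heq ▸ mem_closure_pair_right M hyE huE

lemma key (hs : M.IsSimpleMatroid) (hrk : ∃ B, M.IsBase B ∧ B.encard = 3)
    {K₁ K₂ K₃ : Set α}
    (hK₁ : M.IsLongLine K₁) (hK₂ : M.IsLongLine K₂) (hK₃ : M.IsLongLine K₃)
    (hx₁ : x ∈ K₁) (hx₂ : x ∈ K₂) (hx₃ : x ∈ K₃)
    (h12 : K₁ ∩ K₂ = {x}) (h13 : K₁ ∩ K₃ = {x}) (h23 : K₂ ∩ K₃ = {x})
    (h4₁ : K₁.encard = 4) (h4₂ : K₂.encard = 4)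
    (hy3 : y ∈ K₃) (hyx : y ≠ x) :
    M.HasU25Minor ∨ 4 ≤ {L : Set α | M.IsLongLine L ∧ y ∈ L}.encard := by
  have hE₁ : K₁ ⊆ M.E := hK₁.1.1.subset_ground
  have hE₂ : K₂ ⊆ M.E := hK₂.1.1.subset_ground
  have hE₃ : K₃ ⊆ M.E := hK₃.1.1.subset_ground
  have hyE : y ∈ M.E := hE₃ hy3
  have hxE : x ∈ M.E := hE₃ hx₃
  have hyK₁ : y ∉ K₁ := fun h => hyx (by
    have : y ∈ K₁ ∩ K₃ := ⟨h, hy3⟩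
    rwa [h13, mem_singleton_iff] at this)
  have hyK₂ : y ∉ K₂ := fun h => hyx (by
    have : y ∈ K₂ ∩ K₃ := ⟨h, hy3⟩
    rwa [h23, mem_singleton_iff] at this)
  -- the line through y and x is K₃
  have hclx : M.closure {y, x} = K₃ :=
    (line_eq_closure_pair hK₃.1 (pair_indep hs hyE hxE) hyx hy3 hx₃).symm
  by_cases hcase : ∀ a ∈ K₁ \ {x}, ∃ w ∈ K₂ \ {x}, w ∈ M.closure {y, a}
  · -- y lies on at least 4 long lines
    right
    have h3 : (K₁ \ {x}).encard = 3 := by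
      have h := encard_diff_singleton_add_one hx₁
      rw [h4₁] at h
      have h' : (K₁ \ {x}).encard + 1 = 3 + 1 := by rw [h]; norm_num
      exact ENat.add_left_injective_of_ne_top (by simp) h'
    obtain ⟨a, b, c, hab, hac, hbc, habc⟩ := encard_eq_three.mp h3
    have hmem : ∀ t ∈ ({a, b, c} : Set α), t ∈ K₁ ∧ t ≠ x := by
      intro t ht
      have : t ∈ K₁ \ {x} := habc ▸ ht
      exact ⟨this.1, this.2⟩
    have hlong : ∀ t ∈ K₁ \ {x}, M.IsLongLine (M.closure {y, t}) := by
      rintro t ⟨ht1, htx⟩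
      have htx : t ≠ x := htx
      have htE : t ∈ M.E := hE₁ ht1
      have hyt : y ≠ t := fun h => hyK₁ (h ▸ ht1)
      obtain ⟨w, hw, hwcl⟩ := hcase t ⟨ht1, htx⟩
      have hyw : y ≠ w := fun h => hyK₂ (h ▸ hw.1)
      have htw : t ≠ w := fun h => hw.2 (by
        have : t ∈ K₁ ∩ K₂ := ⟨ht1, h ▸ hw.1⟩
        rw [h12, mem_singleton_iff] at this
        exact h ▸ this)
      refine ⟨pair_closure_isLine (pair_indep hs hyE htE) hyt, ?_⟩
      have hsub : ({y, t, w} : Set α) ⊆ M.closure {y, t} := by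
        refine insert_subset (mem_closure_pair_left M hyE htE)
          (insert_subset (mem_closure_pair_right M hyE htE) ?_)
        simpa using hwcl
      have h3' : ({y, t, w} : Set α).encard = 3 := by
        rw [encard_insert_of_notMem (by simp [hyt, hyw]), encard_pair htw]
        norm_num
      exact h3' ▸ encard_le_encard hsub
    have hdist : ∀ s ∈ K₁ \ {x}, ∀ t ∈ K₁ \ {x}, s ≠ t →
        M.closure {y, s} ≠ M.closure {y, t} := by
      rintro s ⟨hs1, hsx⟩ t ⟨ht1, htx⟩ hst heq
      have hys : y ≠ s := fun h => hyK₁ (h ▸ hs1)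
      have htcl : t ∈ M.closure {y, s} := heq ▸ mem_closure_pair_right M hyE (hE₁ ht1)
      have hscl : s ∈ M.closure {y, s} := mem_closure_pair_right M hyE (hE₁ hs1)
      have hK : M.closure {y, s} = K₁ :=
        line_unique (pair_closure_isLine (pair_indep hs hyE (hE₁ hs1)) hys) hK₁.1
          (pair_indep hs (hE₁ hs1) (hE₁ ht1)) hst hscl htcl hs1 ht1
      exact hyK₁ (hK ▸ mem_closure_pair_left M hyE (hE₁ hs1))
    have hK₃ne : ∀ t ∈ K₁ \ {x}, K₃ ≠ M.closure {y, t} := by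
      rintro t ⟨ht1, htx⟩ heq
      have : t ∈ K₃ := heq ▸ mem_closure_pair_right M hyE (hE₁ ht1)
      have : t ∈ K₁ ∩ K₃ := ⟨ht1, this⟩
      rw [h13, mem_singleton_iff] at this
      exact htx this
    have hamem : a ∈ K₁ \ {x} := habc ▸ (by simp)
    have hbmem : b ∈ K₁ \ {x} := habc ▸ (by simp)
    have hcmem : c ∈ K₁ \ {x} := habc ▸ (by simp)
    have hsub : ({K₃, M.closure {y, a}, M.closure {y, b}, M.closure {y, c}} : Set (Set α)) ⊆
        {L : Set α | M.IsLongLine L ∧ y ∈ L} := by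
      rintro L (rfl | rfl | rfl | rfl)
      · exact ⟨hK₃, hy3⟩
      · exact ⟨hlong a hamem, mem_closure_pair_left M hyE (hE₁ hamem.1)⟩
      · exact ⟨hlong b hbmem, mem_closure_pair_left M hyE (hE₁ hbmem.1)⟩
      · exact ⟨hlong c hcmem, mem_closure_pair_left M hyE (hE₁ hcmem.1)⟩
    have hcard : ({K₃, M.closure {y, a}, M.closure {y, b}, M.closure {y, c}} :
        Set (Set α)).encard = 4 := by
      rw [encard_insert_of_notMem (by
          simp only [mem_insert_iff, mem_singleton_iff]
          push_neg
          exact ⟨hK₃ne a hamem, hK₃ne b hbmem, hK₃ne c hcmem⟩),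
        encard_insert_of_notMem (by
          simp only [mem_insert_iff, mem_singleton_iff]
          push_neg
          exact ⟨hdist a hamem b hbmem hab, hdist a hamem c hcmem hac⟩),
        encard_pair (hdist b hbmem c hcmem hbc)]
      norm_num
    exact hcard ▸ encard_le_encard hsub
  · -- U_{2,5} minor
    left
    push_neg at hcase
    obtain ⟨a, hamem, hmiss⟩ := hcase
    obtain ⟨ha1, hax⟩ := hamem
    have hax : a ≠ x := hax
    have haE : a ∈ M.E := hE₁ ha1
    have hya : y ≠ a := fun h => hyK₁ (h ▸ ha1)
    have h3 : (K₂ \ {x}).encard = 3 := by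
      have h := encard_diff_singleton_add_one hx₂
      rw [h4₂] at h
      have h' : (K₂ \ {x}).encard + 1 = 3 + 1 := by rw [h]; norm_num
      exact ENat.add_left_injective_of_ne_top (by simp) h'
    obtain ⟨p, q, r, hpq, hpr, hqr, hpqr⟩ := encard_eq_three.mp h3
    have hpm : p ∈ K₂ \ {x} := hpqr ▸ (by simp)
    have hqm : q ∈ K₂ \ {x} := hpqr ▸ (by simp)
    have hrm : r ∈ K₂ \ {x} := hpqr ▸ (by simp)
    have hKE : ∀ w ∈ K₂ \ {x}, w ∈ M.E := fun w hw => hE₂ hw.1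
    have hyw : ∀ w ∈ K₂ \ {x}, y ≠ w := fun w hw h => hyK₂ (h ▸ hw.1)
    have haK₂ : ∀ w ∈ K₂ \ {x}, a ≠ w := by
      rintro w hw rfl
      have : a ∈ K₁ ∩ K₂ := ⟨ha1, hw.1⟩
      rw [h12, mem_singleton_iff] at this
      exact hax this
    -- a, p, q, r are not on K₃
    have hnK₃a : a ∉ K₃ := fun h => hax (by
      have : a ∈ K₁ ∩ K₃ := ⟨ha1, h⟩
      rwa [h13, mem_singleton_iff] at this)
    have hnK₃w : ∀ w ∈ K₂ \ {x}, w ∉ K₃ := by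
      intro w hw h
      have : w ∈ K₂ ∩ K₃ := ⟨hw.1, h⟩
      rw [h23, mem_singleton_iff] at this
      exact hw.2 this
    -- pairwise non-collinearity facts
    have hnotxa : a ∉ M.closure {y, x} := fun h => hnK₃a (hclx ▸ h)
    have hnotxw : ∀ w ∈ K₂ \ {x}, w ∉ M.closure {y, x} := fun w hw h => hnK₃w w hw (hclx ▸ h)
    have hxnota : x ∉ M.closure {y, a} := fun h =>
      hnotxa (mem_closure_pair_symm hs hyE haE hya hyx h)
    have hxnotw : ∀ w ∈ K₂ \ {x}, x ∉ M.closure {y, w} := fun w hw h =>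
      hnotxw w hw (mem_closure_pair_symm hs hyE (hKE w hw) (hyw w hw) hyx h)
    have hpa : ∀ w ∈ K₂ \ {x}, a ∉ M.closure {y, w} := fun w hw h =>
      hmiss w hw (mem_closure_pair_symm hs hyE (hKE w hw) (hyw w hw) hya h)
    have hww : ∀ w ∈ K₂ \ {x}, ∀ w' ∈ K₂ \ {x}, w ≠ w' → w' ∉ M.closure {y, w} := by
      intro w hw w' hw' hne h
      have hKeq : M.closure {y, w} = K₂ :=
        line_unique (pair_closure_isLine (pair_indep hs hyE (hKE w hw)) (hyw w hw)) hK₂.1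
          (pair_indep hs (hKE w hw) (hKE w' hw')) hne
          (mem_closure_pair_right M hyE (hKE w hw)) h hw.1 hw'.1
      exact hyK₂ (hKeq ▸ mem_closure_pair_left M hyE (hKE w hw))
    -- build the 5-point set
    set X : Set α := {x, a, p, q, r} with hX
    have hXsub : X ⊆ M.E := by
      rintro u (rfl | rfl | rfl | rfl | rfl)
      exacts [hxE, haE, hKE _ hpm, hKE _ hqm, hKE _ hrm]
    have hyXne : y ∉ X := by
      rintro (rfl | rfl | rfl | rfl | rfl)
      exacts [hyx rfl, hya rfl, hyw _ hpm rfl, hyw _ hqm rfl, hyw _ hrm rfl]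
    have hX5 : X.encard = 5 := by
      rw [hX, encard_insert_of_notMem (by
          simp only [mem_insert_iff, mem_singleton_iff]
          push_neg
          exact ⟨fun h => hax h.symm, fun h => hpm.2 h.symm, fun h => hqm.2 h.symm,
            fun h => hrm.2 h.symm⟩),
        encard_insert_of_notMem (by
          simp only [mem_insert_iff, mem_singleton_iff]
          push_neg
          exact ⟨haK₂ p hpm, haK₂ q hqm, haK₂ r hrm⟩),
        encard_insert_of_notMem (by
          simp only [mem_insert_iff, mem_singleton_iff]
          push_neg
          exact ⟨hpq, hpr⟩),
        encard_pair hqr]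
      norm_num
    refine u25_of_five_points hs hrk hyE hXsub hyXne hX5 ?_
    rintro u (rfl | rfl | rfl | rfl | rfl) v hv hne hcl
    · -- u = x
      rcases hv with rfl | rfl | rfl | rfl | rfl
      · exact hne rfl
      exacts [hnotxa hcl, hnotxw _ hpm hcl, hnotxw _ hqm hcl, hnotxw _ hrm hcl]
    · -- u = a
      rcases hv with rfl | rfl | rfl | rfl | rfl
      · exact hxnota hcl
      · exact hne rfl
      exacts [hmiss _ hpm hcl, hmiss _ hqm hcl, hmiss _ hrm hcl]
    · -- u = p
      rcases hv with rfl | rfl | rfl | rfl | rfl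
      · exact hxnotw _ hpm hcl
      · exact hpa _ hpm hcl
      · exact hne rfl
      exacts [hww _ hpm _ hqm hpq hcl, hww _ hpm _ hrm hpr hcl]
    · -- u = q
      rcases hv with rfl | rfl | rfl | rfl | rfl
      · exact hxnotw _ hqm hcl
      · exact hpa _ hqm hcl
      · exact hww _ hqm _ hpm hpq.symm hcl
      · exact hne rfl
      · exact hww _ hqm _ hrm hqr hcl
    · -- u = r
      rcases hv with rfl | rfl | rfl | rfl | rfl
      · exact hxnotw _ hrm hcl
      · exact hpa _ hrm hcl
      · exact hww _ hrm _ hpm hpr.symm hcl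
      · exact hww _ hrm _ hqm hqr.symm hcl
      · exact hne rfl

end MyAux

open Set MyAux

/-- A simple rank-`3` matroid on `9` elements consisting of three long lines through
a common point either has a `U_{2,5}`-minor or is the ternary Reid geometry `R₉`:
two of the lines have four points, the third has three points, and both elements of
the third line other than the common point lie on at least four long lines. -/
theorem statement13 (M : Matroid α) (hs : M.IsSimpleMatroid)
    (hrk : ∃ B, M.IsBase B ∧ B.encard = 3)
    (hE : M.E.encard = 9)
    (x : α) (hx : x ∈ M.E)
    (L₁ L₂ L₃ : Set α)
    (hL₁ : M.IsLongLine L₁) (hL₂ : M.IsLongLine L₂) (hL₃ : M.IsLongLine L₃)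
    (hne₁₂ : L₁ ≠ L₂) (hne₁₃ : L₁ ≠ L₃) (hne₂₃ : L₂ ≠ L₃)
    (hx₁ : x ∈ L₁) (hx₂ : x ∈ L₂) (hx₃ : x ∈ L₃)
    (hcover : M.E = L₁ ∪ L₂ ∪ L₃) :
    M.HasU25Minor ∨
      ∃ K₁ K₂ K₃ : Set α, ({K₁, K₂, K₃} : Set (Set α)) = {L₁, L₂, L₃} ∧
        K₁.encard = 4 ∧ K₂.encard = 4 ∧ K₃.encard = 3 ∧
        ∀ y ∈ K₃ \ {x}, 4 ≤ {L : Set α | M.IsLongLine L ∧ y ∈ L}.encard := by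
  by_cases hU : M.HasU25Minor
  · exact Or.inl hU
  -- every line has at most 4 points
  have hle4 : ∀ L, M.IsLine L → L.encard ≤ 4 := by
    intro L hL
    by_contra hgt
    rw [not_le] at hgt
    have h5 : 5 ≤ L.encard := Order.add_one_le_of_lt hgt
    exact hU (u25_of_line_five hs hL h5)
  -- pairwise intersections are {x}
  have hsub12 : L₁ ∩ L₂ = {x} := subset_antisymm
    (fun w hw => mem_singleton_iff.mpr
      (lines_inter_subsingleton hs hL₁.1 hL₂.1 hne₁₂ hw ⟨hx₁, hx₂⟩))
    (singleton_subset_iff.mpr ⟨hx₁, hx₂⟩)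
  have hsub13 : L₁ ∩ L₃ = {x} := subset_antisymm
    (fun w hw => mem_singleton_iff.mpr
      (lines_inter_subsingleton hs hL₁.1 hL₃.1 hne₁₃ hw ⟨hx₁, hx₃⟩))
    (singleton_subset_iff.mpr ⟨hx₁, hx₃⟩)
  have hsub23 : L₂ ∩ L₃ = {x} := subset_antisymm
    (fun w hw => mem_singleton_iff.mpr
      (lines_inter_subsingleton hs hL₂.1 hL₃.1 hne₂₃ hw ⟨hx₂, hx₃⟩))
    (singleton_subset_iff.mpr ⟨hx₂, hx₃⟩)
  -- counting
  have hcard : ∀ L, x ∈ L → M.IsLongLine L →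
      ∃ k : ℕ, (L \ {x}).encard = k ∧ 2 ≤ k ∧ k ≤ 3 := by
    intro L hxL hL
    have hfin : (L \ {x}).Finite := by
      rw [← encard_ne_top_iff]
      intro h
      have := hle4 L hL.1
      have h' := encard_diff_singleton_add_one hxL
      rw [h] at h'
      rw [← h'] at this
      simp at this
    obtain ⟨k, hk⟩ := hfin.exists_encard_eq_coe
    refine ⟨k, hk, ?_, ?_⟩
    · have h3 := hL.2
      rw [← encard_diff_singleton_add_one hxL, hk] at h3
      have : ((3 : ℕ) : ℕ∞) ≤ ((k + 1 : ℕ) : ℕ∞) := by push_cast; exact_mod_cast h3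
      have := Nat.cast_le.mp this
      omega
    · have h4 := hle4 L hL.1
      rw [← encard_diff_singleton_add_one hxL, hk] at h4
      have : ((k + 1 : ℕ) : ℕ∞) ≤ ((4 : ℕ) : ℕ∞) := by push_cast; exact_mod_cast h4
      have := Nat.cast_le.mp this
      omega
  obtain ⟨k₁, hk₁, hk₁2, hk₁3⟩ := hcard L₁ hx₁ hL₁
  obtain ⟨k₂, hk₂, hk₂2, hk₂3⟩ := hcard L₂ hx₂ hL₂
  obtain ⟨k₃, hk₃, hk₃2, hk₃3⟩ := hcard L₃ hx₃ hL₃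
  have hdisj12 : Disjoint (L₁ \ {x}) (L₂ \ {x}) := by
    rw [disjoint_left]
    rintro w ⟨hw1, hwx⟩ ⟨hw2, -⟩
    exact hwx (by
      have : w ∈ L₁ ∩ L₂ := ⟨hw1, hw2⟩
      rwa [hsub12] at this)
  have hdisj13 : Disjoint (L₁ \ {x}) (L₃ \ {x}) := by
    rw [disjoint_left]
    rintro w ⟨hw1, hwx⟩ ⟨hw2, -⟩
    exact hwx (by
      have : w ∈ L₁ ∩ L₃ := ⟨hw1, hw2⟩
      rwa [hsub13] at this)
  have hdisj23 : Disjoint (L₂ \ {x}) (L₃ \ {x}) := by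
    rw [disjoint_left]
    rintro w ⟨hw1, hwx⟩ ⟨hw2, -⟩
    exact hwx (by
      have : w ∈ L₂ ∩ L₃ := ⟨hw1, hw2⟩
      rwa [hsub23] at this)
  have hEeq : M.E = insert x ((L₁ \ {x}) ∪ ((L₂ \ {x}) ∪ (L₃ \ {x}))) := by
    rw [hcover]
    ext w
    simp only [mem_insert_iff, mem_union, mem_diff, mem_singleton_iff]
    by_cases hw : w = x
    · subst hw; simp [hx₁]
    · simp [hw]; tauto
  have hxni : x ∉ (L₁ \ {x}) ∪ ((L₂ \ {x}) ∪ (L₃ \ {x})) := by simp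
  have h9 : ((L₁ \ {x}).encard + ((L₂ \ {x}).encard + (L₃ \ {x}).encard)) + 1 = 9 := by
    rw [← encard_union_eq hdisj23, ← encard_union_eq (disjoint_union_right.mpr ⟨hdisj12, hdisj13⟩),
      ← encard_insert_of_notMem hxni, ← hEeq, hE]
  rw [hk₁, hk₂, hk₃] at h9
  have h9' : k₁ + k₂ + k₃ + 1 = 9 := by
    have : (((k₁ + (k₂ + k₃)) + 1 : ℕ) : ℕ∞) = ((9 : ℕ) : ℕ∞) := by push_cast; exact_mod_cast h9
    have := Nat.cast_inj.mp this
    omega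
  have henc : ∀ (L : Set α) (k : ℕ), x ∈ L → (L \ {x}).encard = k → L.encard = (k : ℕ∞) + 1 := by
    intro L k hxL hk
    rw [← encard_diff_singleton_add_one hxL, hk]
  have hL₁e := henc L₁ k₁ hx₁ hk₁
  have hL₂e := henc L₂ k₂ hx₂ hk₂
  have hL₃e := henc L₃ k₃ hx₃ hk₃
  have hcases : (k₁ = 3 ∧ k₂ = 3 ∧ k₃ = 2) ∨ (k₁ = 3 ∧ k₂ = 2 ∧ k₃ = 3) ∨
      (k₁ = 2 ∧ k₂ = 3 ∧ k₃ = 3) := by omega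
  right
  rcases hcases with ⟨e1, e2, e3⟩ | ⟨e1, e2, e3⟩ | ⟨e1, e2, e3⟩
  · subst e1; subst e2; subst e3
    refine ⟨L₁, L₂, L₃, rfl, by rw [hL₁e]; norm_num, by rw [hL₂e]; norm_num,
      by rw [hL₃e]; norm_num, ?_⟩
    rintro y ⟨hy3, hyx⟩
    exact (key hs hrk hL₁ hL₂ hL₃ hx₁ hx₂ hx₃ hsub12 hsub13 hsub23
      (by rw [hL₁e]; norm_num) (by rw [hL₂e]; norm_num) hy3 hyx).resolve_left hU
  · subst e1; subst e2; subst e3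
    refine ⟨L₁, L₃, L₂, by ext; simp; tauto, by rw [hL₁e]; norm_num, by rw [hL₃e]; norm_num,
      by rw [hL₂e]; norm_num, ?_⟩
    rintro y ⟨hy3, hyx⟩
    exact (key hs hrk hL₁ hL₃ hL₂ hx₁ hx₃ hx₂ hsub13 hsub12
      (by rw [inter_comm]; exact hsub23)
      (by rw [hL₁e]; norm_num) (by rw [hL₃e]; norm_num) hy3 hyx).resolve_left hU
  · subst e1; subst e2; subst e3
    refine ⟨L₂, L₃, L₁, by ext; simp; tauto, by rw [hL₂e]; norm_num, by rw [hL₃e]; norm_num,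
      by rw [hL₁e]; norm_num, ?_⟩
    rintro y ⟨hy3, hyx⟩
    exact (key hs hrk hL₂ hL₃ hL₁ hx₂ hx₃ hx₁ hsub23
      (by rw [inter_comm]; exact hsub12) (by rw [inter_comm]; exact hsub13)
      (by rw [hL₂e]; norm_num) (by rw [hL₃e]; norm_num) hy3 hyx).resolve_left hU
end

section
/- For every integer r ≥ 2, the matrix A'_r has rank r over ℚ, has exactly binom(r+2,2) − 2 columns, each of its columns is nonzero, and every two distinct columns of A'_r are linearly independent over ℚ. (Hence the vector matroid of A'_r is a simple rank-r matroid of size binom(r+2,2) − 2, attaining the maximum in the main theorem.) -/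
/-- A column of `A'_r`, viewed as a vector over `ℚ`. -/
def A'colQ (r : ℕ) (j : Fin r ⊕ PairIdx r ⊕ Fin (r - 2) ⊕ Unit) : Fin r → ℚ :=
  fun i => (A'mat r i j : ℚ)

lemma colE_apply (r : ℕ) (k i : Fin r) :
    A'colQ r (Sum.inl k) i = if (i : ℕ) = (k : ℕ) then 1 else 0 := by
  simp [A'colQ, A'mat, Fin.ext_iff, apply_ite ((↑) : ℤ → ℚ)]

lemma colD_apply (r : ℕ) (p : PairIdx r) (i : Fin r) :
    A'colQ r (Sum.inr (Sum.inl p)) i =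
      (if (i : ℕ) = (p.1.1 : ℕ) then 1 else 0) +
        (if (i : ℕ) = (p.1.2 : ℕ) then -1 else 0) := by
  simp [A'colQ, A'mat, Fin.ext_iff, apply_ite ((↑) : ℤ → ℚ)]

lemma colC_apply (r : ℕ) (m : Fin (r - 2)) (i : Fin r) :
    A'colQ r (Sum.inr (Sum.inr (Sum.inl m))) i =
      (if (i : ℕ) = 0 then 1 else 0) + (if (i : ℕ) = 1 then 1 else 0)
        - (if (i : ℕ) = (m : ℕ) + 2 then 1 else 0) := by
  simp [A'colQ, A'mat, apply_ite ((↑) : ℤ → ℚ)]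

lemma colW_apply (r : ℕ) (u : Unit) (i : Fin r) :
    A'colQ r (Sum.inr (Sum.inr (Sum.inr u))) i =
      (if (i : ℕ) = 0 then 1 else 0) + (if (i : ℕ) = 1 then 1 else 0) := by
  simp [A'colQ, A'mat, apply_ite ((↑) : ℤ → ℚ)]

lemma pair_indep {n : ℕ} {v w : Fin n → ℚ} (a b : Fin n)
    (h : v a * w b - v b * w a ≠ 0) : LinearIndependent ℚ ![v, w] := by
  rw [LinearIndependent.pair_iff]
  intro s t hst
  have ha : s * v a + t * w a = 0 := by
    have := congrFun hst a; simpa using this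
  have hb : s * v b + t * w b = 0 := by
    have := congrFun hst b; simpa using this
  have hs : s * (v a * w b - v b * w a) = 0 := by linear_combination w b * ha - w a * hb
  have ht : t * (v a * w b - v b * w a) = 0 := by linear_combination (-v b) * ha + v a * hb
  exact ⟨(mul_eq_zero.1 hs).resolve_right h, (mul_eq_zero.1 ht).resolve_right h⟩

set_option maxHeartbeats 2000000 in
/-- For every `r ≥ 2`, the matrix `A'_r` has rank `r` over `ℚ`, has exactly
`(r+2 choose 2) - 2` columns, and its columns are nonzero and pairwise linearly
independent over `ℚ`; hence its vector matroid is a simple rank-`r` matroid of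
size `(r+2 choose 2) - 2`. -/
theorem statement14 (r : ℕ) (hr : 2 ≤ r) :
    ((A'mat r).map ((↑) : ℤ → ℚ)).rank = r ∧
    Fintype.card (Fin r ⊕ PairIdx r ⊕ Fin (r - 2) ⊕ Unit) = Nat.choose (r + 2) 2 - 2 ∧
    (∀ j, A'colQ r j ≠ 0) ∧
    (∀ j j', j ≠ j' → LinearIndependent ℚ ![A'colQ r j, A'colQ r j']) := by
  have h0 : (0 : ℕ) < r := by omega
  have h1 : (1 : ℕ) < r := by omega
  refine ⟨?_, ?_, ?_, ?_⟩
  · -- rank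
    have hsurj : Function.Surjective ((A'mat r).map ((↑) : ℤ → ℚ)).mulVecLin := by
      intro y
      refine ⟨Sum.elim y (fun _ => 0), ?_⟩
      ext i
      simp [Matrix.mulVecLin_apply, Matrix.mulVec, dotProduct, Fintype.sum_sum_type,
        Matrix.map_apply, A'mat, ite_mul, Finset.sum_ite_eq']
    refine le_antisymm (((A'mat r).map _).rank_le_card_height.trans (by simp)) ?_
    rw [Matrix.rank, LinearMap.range_eq_top.2 hsurj]
    simp
  · -- cardinality
    have e : PairIdx r ≃ Σ j : Fin r, Fin (j : ℕ) :=
      { toFun := fun p => ⟨p.1.2, ⟨(p.1.1 : ℕ), p.2⟩⟩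
        invFun := fun q => ⟨(⟨(q.2 : ℕ), lt_trans q.2.isLt q.1.isLt⟩, q.1), q.2.isLt⟩
        left_inv := fun p => rfl
        right_inv := fun q => rfl }
    have hcard : Fintype.card (PairIdx r) = r.choose 2 := by
      rw [Fintype.card_congr e, Fintype.card_sigma]
      simp only [Fintype.card_fin]
      rw [Fin.sum_univ_eq_sum_range (fun i => i) r, Finset.sum_range_id, Nat.choose_two_right]
    have hch : (r + 2).choose 2 = (r + 1) + r + r.choose 2 := by
      rw [Nat.choose_succ_succ (r + 1) 1, Nat.choose_succ_succ r 1]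
      simp [Nat.choose_one_right]
      ring
    simp only [Fintype.card_sum, Fintype.card_fin, Fintype.card_unit, hcard, hch]
    omega
  · -- nonzero columns
    rintro (k | p | m | u) h
    · have := congrFun h k
      simp [colE_apply] at this
    · have := congrFun h p.1.1
      have hlt : (p.1.1 : ℕ) < (p.1.2 : ℕ) := p.2
      simp [colD_apply, hlt.ne] at this
    · have := congrFun h (⟨0, h0⟩ : Fin r)
      simp [colC_apply] at this
    · have := congrFun h (⟨0, h0⟩ : Fin r)
      simp [colW_apply] at this
  · -- pairwise linear independence
    rintro (k | p | m | u) (k' | p' | m' | u') hne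
    -- E, E
    · have hkk : (k : ℕ) ≠ (k' : ℕ) := fun h => hne (by simp [Fin.ext_iff, h])
      apply pair_indep k k'
      simp only [colE_apply]
      split_ifs <;> first | (exfalso; omega) | norm_num | tauto
    -- E, D
    · by_cases hk : (k : ℕ) = (p'.1.1 : ℕ)
      · apply pair_indep k p'.1.2
        have hlt : (p'.1.1 : ℕ) < (p'.1.2 : ℕ) := p'.2
        simp only [colE_apply, colD_apply]
        split_ifs <;> first | (exfalso; omega) | norm_num | tauto
      · apply pair_indep k p'.1.1
        have hlt : (p'.1.1 : ℕ) < (p'.1.2 : ℕ) := p'.2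
        simp only [colE_apply, colD_apply]
        split_ifs <;> first | (exfalso; omega) | norm_num | tauto
    -- E, C
    · by_cases hk : (k : ℕ) = 0
      · apply pair_indep k (⟨1, h1⟩ : Fin r)
        simp only [colE_apply, colC_apply]
        split_ifs <;> first | (exfalso; omega) | norm_num | tauto
      · apply pair_indep k (⟨0, h0⟩ : Fin r)
        simp only [colE_apply, colC_apply]
        split_ifs <;> first | (exfalso; omega) | norm_num | tauto
    -- E, W
    · by_cases hk : (k : ℕ) = 0
      · apply pair_indep k (⟨1, h1⟩ : Fin r)
        simp only [colE_apply, colW_apply]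
        split_ifs <;> first | (exfalso; omega) | norm_num | tauto
      · apply pair_indep k (⟨0, h0⟩ : Fin r)
        simp only [colE_apply, colW_apply]
        split_ifs <;> first | (exfalso; omega) | norm_num | tauto
    -- D, E
    · by_cases hk : (k' : ℕ) = (p.1.1 : ℕ)
      · apply pair_indep k' p.1.2
        have hlt : (p.1.1 : ℕ) < (p.1.2 : ℕ) := p.2
        simp only [colE_apply, colD_apply]
        split_ifs <;> first | (exfalso; omega) | norm_num | tauto
      · apply pair_indep k' p.1.1
        have hlt : (p.1.1 : ℕ) < (p.1.2 : ℕ) := p.2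
        simp only [colE_apply, colD_apply]
        split_ifs <;> first | (exfalso; omega) | norm_num | tauto
    -- D, D
    · have hlt : (p.1.1 : ℕ) < (p.1.2 : ℕ) := p.2
      have hlt' : (p'.1.1 : ℕ) < (p'.1.2 : ℕ) := p'.2
      by_cases h11 : (p.1.1 : ℕ) = (p'.1.1 : ℕ)
      · have h22 : (p.1.2 : ℕ) ≠ (p'.1.2 : ℕ) := by
          intro h
          apply hne
          have : p.1 = p'.1 := Prod.ext (Fin.ext h11) (Fin.ext h)
          exact congrArg (fun q => Sum.inr (Sum.inl q)) (Subtype.ext this)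
        apply pair_indep p.1.2 p'.1.2
        simp only [colD_apply]
        split_ifs <;> first | (exfalso; omega) | norm_num | tauto
      · by_cases h12 : (p.1.1 : ℕ) = (p'.1.2 : ℕ)
        · apply pair_indep p.1.2 p'.1.1
          simp only [colD_apply]
          split_ifs <;> first | (exfalso; omega) | norm_num | tauto
        · apply pair_indep p.1.1 p'.1.1
          simp only [colD_apply]
          split_ifs <;> first | (exfalso; omega) | norm_num | tauto
    -- D, C
    · have hlt : (p.1.1 : ℕ) < (p.1.2 : ℕ) := p.2
      by_cases hi : (p.1.1 : ℕ) = 0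
      · by_cases hj : (p.1.2 : ℕ) = (m' : ℕ) + 2
        · apply pair_indep (⟨1, h1⟩ : Fin r) (⟨0, h0⟩ : Fin r)
          simp only [colD_apply, colC_apply]
          split_ifs <;> first | (exfalso; omega) | norm_num | tauto
        · apply pair_indep p.1.2 (⟨0, h0⟩ : Fin r)
          simp only [colD_apply, colC_apply]
          split_ifs <;> first | (exfalso; omega) | norm_num | tauto
      · apply pair_indep p.1.1 (⟨0, h0⟩ : Fin r)
        simp only [colD_apply, colC_apply]
        split_ifs <;> first | (exfalso; omega) | norm_num | tauto
    -- D, W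
    · have hlt : (p.1.1 : ℕ) < (p.1.2 : ℕ) := p.2
      by_cases hi : (p.1.1 : ℕ) = 0
      · apply pair_indep p.1.2 (⟨0, h0⟩ : Fin r)
        simp only [colD_apply, colW_apply]
        split_ifs <;> first | (exfalso; omega) | norm_num | tauto
      · apply pair_indep p.1.1 (⟨0, h0⟩ : Fin r)
        simp only [colD_apply, colW_apply]
        split_ifs <;> first | (exfalso; omega) | norm_num | tauto
    -- C, E
    · by_cases hk : (k' : ℕ) = 0
      · apply pair_indep k' (⟨1, h1⟩ : Fin r)
        simp only [colE_apply, colC_apply]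
        split_ifs <;> first | (exfalso; omega) | norm_num | tauto
      · apply pair_indep k' (⟨0, h0⟩ : Fin r)
        simp only [colE_apply, colC_apply]
        split_ifs <;> first | (exfalso; omega) | norm_num | tauto
    -- C, D
    · have hlt : (p'.1.1 : ℕ) < (p'.1.2 : ℕ) := p'.2
      by_cases hi : (p'.1.1 : ℕ) = 0
      · by_cases hj : (p'.1.2 : ℕ) = (m : ℕ) + 2
        · apply pair_indep (⟨1, h1⟩ : Fin r) (⟨0, h0⟩ : Fin r)
          simp only [colD_apply, colC_apply]
          split_ifs <;> first | (exfalso; omega) | norm_num | tauto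
        · apply pair_indep p'.1.2 (⟨0, h0⟩ : Fin r)
          simp only [colD_apply, colC_apply]
          split_ifs <;> first | (exfalso; omega) | norm_num | tauto
      · apply pair_indep p'.1.1 (⟨0, h0⟩ : Fin r)
        simp only [colD_apply, colC_apply]
        split_ifs <;> first | (exfalso; omega) | norm_num | tauto
    -- C, C
    · have hmm : (m : ℕ) ≠ (m' : ℕ) := by
        intro h
        exact hne (by simp [Fin.ext_iff, h])
      have hm : (m : ℕ) + 2 < r := by have := m.isLt; omega
      have hm' : (m' : ℕ) + 2 < r := by have := m'.isLt; omega
      apply pair_indep (⟨(m : ℕ) + 2, hm⟩ : Fin r) (⟨(m' : ℕ) + 2, hm'⟩ : Fin r)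
      simp only [colC_apply]
      split_ifs <;> first | (exfalso; omega) | norm_num | tauto
    -- C, W
    · have hm : (m : ℕ) + 2 < r := by have := m.isLt; omega
      apply pair_indep (⟨(m : ℕ) + 2, hm⟩ : Fin r) (⟨0, h0⟩ : Fin r)
      simp only [colC_apply, colW_apply]
      split_ifs <;> first | (exfalso; omega) | norm_num | tauto
    -- W, E
    · by_cases hk : (k' : ℕ) = 0
      · apply pair_indep k' (⟨1, h1⟩ : Fin r)
        simp only [colE_apply, colW_apply]
        split_ifs <;> first | (exfalso; omega) | norm_num | tauto
      · apply pair_indep k' (⟨0, h0⟩ : Fin r)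
        simp only [colE_apply, colW_apply]
        split_ifs <;> first | (exfalso; omega) | norm_num | tauto
    -- W, D
    · have hlt : (p'.1.1 : ℕ) < (p'.1.2 : ℕ) := p'.2
      by_cases hi : (p'.1.1 : ℕ) = 0
      · apply pair_indep p'.1.2 (⟨0, h0⟩ : Fin r)
        simp only [colD_apply, colW_apply]
        split_ifs <;> first | (exfalso; omega) | norm_num | tauto
      · apply pair_indep p'.1.1 (⟨0, h0⟩ : Fin r)
        simp only [colD_apply, colW_apply]
        split_ifs <;> first | (exfalso; omega) | norm_num | tauto
    -- W, C
    · have hm : (m' : ℕ) + 2 < r := by have := m'.isLt; omega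
      apply pair_indep (⟨(m' : ℕ) + 2, hm⟩ : Fin r) (⟨0, h0⟩ : Fin r)
      simp only [colC_apply, colW_apply]
      split_ifs <;> first | (exfalso; omega) | norm_num | tauto
    -- W, W
    · exact absurd rfl hne
end
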